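/- arXiv:1410.4037 — 3 statements merged into one kernel-verified Lean document; each statement's English description precedes it below -/
import Mathlib

section
/- Let K ⊆ L be an algebraic field extension, A a Prüfer v-multiplication domain with quotient field K, and B an integrally closed essential domain with quotient field L. Suppose B admits an essential representation 𝒱 such that for every V ∈ 𝒱 the center of V in A is a t-prime ideal of A. Then B is a Prüfer v-multiplication domain. -/
open scoped nonZeroDivisors

/-- The localization of `R` at the prime `p`, viewed inside a field `K` to which `R` maps. -/
def locg {R K : Type*} [CommRing R] [Field K] [Algebra R K] (p : PrimeSpectrum R) :
    Subring K where
  carrier := {x : K | ∃ a b : R, b ∉ p.asIdeal ∧ x * algebraMap R K b = algebraMap R K a}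
  zero_mem' := ⟨0, 1, fun h => p.2.ne_top ((Ideal.eq_top_iff_one _).2 h), by simp⟩
  one_mem' := ⟨1, 1, fun h => p.2.ne_top ((Ideal.eq_top_iff_one _).2 h), by simp⟩
  add_mem' := by
    rintro x y ⟨a₁, b₁, hb₁, e₁⟩ ⟨a₂, b₂, hb₂, e₂⟩
    exact ⟨a₁ * b₂ + a₂ * b₁, b₁ * b₂,
      fun h => ((p.2.mem_or_mem h).elim hb₁ hb₂), by
        rw [map_add, map_mul, map_mul, map_mul]
        linear_combination (algebraMap R K b₂) * e₁ + (algebraMap R K b₁) * e₂⟩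
  mul_mem' := by
    rintro x y ⟨a₁, b₁, hb₁, e₁⟩ ⟨a₂, b₂, hb₂, e₂⟩
    exact ⟨a₁ * a₂, b₁ * b₂,
      fun h => ((p.2.mem_or_mem h).elim hb₁ hb₂), by
        rw [map_mul, map_mul, show x * y * (algebraMap R K b₁ * algebraMap R K b₂)
          = (x * algebraMap R K b₁) * (y * algebraMap R K b₂) by ring, e₁, e₂]⟩
  neg_mem' := by
    rintro x ⟨a, b, hb, e⟩
    exact ⟨-a, b, hb, by rw [map_neg, neg_mul, e]⟩
/-- `I` is a `t`-ideal: its `t`-closure is contained in (hence equal to) `I`. -/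
def IsTIdeal (R : Type*) [CommRing R] [IsDomain R] (I : Ideal R) : Prop :=
  ∀ x : R, (∃ J : Ideal R, J.FG ∧ J ≤ I ∧
    algebraMap R (FractionRing R) x ∈
      (1 / (1 / (J : FractionalIdeal R⁰ (FractionRing R))))) → x ∈ I

/-- `M` is a `t`-maximal ideal: maximal among proper `t`-ideals. -/
def IsTMax (R : Type*) [CommRing R] [IsDomain R] (M : Ideal R) : Prop :=
  IsTIdeal R M ∧ M ≠ ⊤ ∧ ∀ I : Ideal R, IsTIdeal R I → I ≠ ⊤ → M ≤ I → I = M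
/-- `R` is a Prüfer `v`-multiplication domain: the localization at every `t`-maximal
ideal is a valuation domain. -/
def IsPvMD (R : Type*) [CommRing R] [IsDomain R] : Prop :=
  ∀ M : Ideal R, IsTMax R M → ∀ hM : M.IsPrime,
    ValuationRing (locg (K := FractionRing R) ⟨M, hM⟩)
/-- The essential prime spectrum: the primes at which the localization is a valuation
domain. -/
def EssSpec (R : Type*) [CommRing R] [IsDomain R] : Set (PrimeSpectrum R) :=
  {p : PrimeSpectrum R | ValuationRing (locg (K := FractionRing R) p)}

/-- `{D_p : p ∈ Y}` is an essential representation of `R`: each localization is a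
valuation domain, and their intersection (inside the quotient field) is `R`. -/
def IsEssentialRep (R : Type*) [CommRing R] [IsDomain R] (Y : Set (PrimeSpectrum R)) : Prop :=
  (∀ p ∈ Y, ValuationRing (locg (K := FractionRing R) p)) ∧
    (⨅ p ∈ Y, locg (K := FractionRing R) p) = (algebraMap R (FractionRing R)).range

/-- `R` is an essential domain. -/
def IsEssential (R : Type*) [CommRing R] [IsDomain R] : Prop :=
  ∃ Y : Set (PrimeSpectrum R), IsEssentialRep R Y

section AuxBasic

variable {R K : Type*} [CommRing R] [Field K] [Algebra R K]

lemma mem_locg {p : PrimeSpectrum R} {x : K} :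
    x ∈ locg (K := K) p ↔
      ∃ a b : R, b ∉ p.asIdeal ∧ x * algebraMap R K b = algebraMap R K a := Iff.rfl

lemma algebraMap_mem_locg (p : PrimeSpectrum R) (r : R) :
    algebraMap R K r ∈ locg (K := K) p :=
  ⟨r, 1, fun h => p.2.ne_top ((Ideal.eq_top_iff_one _).2 h), by simp⟩

end AuxBasic

/-- auxiliary: `x` is in the `v`-closure of `J`, expressed concretely in a field `F`. -/
def vmem (R : Type*) [CommRing R] (F : Type*) [Field F] [Algebra R F] (J : Ideal R) (x : R) :
    Prop :=
  ∀ t : F, (∀ j ∈ J, t * algebraMap R F j ∈ (algebraMap R F).range) →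
    t * algebraMap R F x ∈ (algebraMap R F).range

section AuxV

variable {R : Type*} [CommRing R] [IsDomain R]

lemma mem_v_iff_vmem {J : Ideal R} (hJ : J ≠ ⊥) (x : R) :
    algebraMap R (FractionRing R) x ∈
        (1 / (1 / (J : FractionalIdeal R⁰ (FractionRing R)))) ↔
      vmem R (FractionRing R) J x := by
  set F := FractionRing R
  have hJ0 : (J : FractionalIdeal R⁰ F) ≠ 0 := by
    simpa [FractionalIdeal.coeIdeal_eq_zero] using hJ
  have hmemdiv : ∀ t : F, t ∈ (1 / (J : FractionalIdeal R⁰ F)) ↔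
      ∀ j ∈ J, t * algebraMap R F j ∈ (algebraMap R F).range := by
    intro t
    rw [FractionalIdeal.mem_div_iff_of_ne_zero hJ0]
    constructor
    · intro h j hj
      have := h _ ((FractionalIdeal.mem_coeIdeal _).mpr ⟨j, hj, rfl⟩)
      rcases (FractionalIdeal.mem_one_iff _).mp this with ⟨a, ha⟩
      exact ⟨a, ha⟩
    · intro h y hy
      rcases (FractionalIdeal.mem_coeIdeal _).mp hy with ⟨j, hj, rfl⟩
      rcases h j hj with ⟨a, ha⟩
      exact (FractionalIdeal.mem_one_iff _).mpr ⟨a, ha⟩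
  have h1Jne : (1 / (J : FractionalIdeal R⁰ F)) ≠ 0 := by
    intro h
    have h1 : (1 : F) ∈ (1 / (J : FractionalIdeal R⁰ F)) := by
      rw [hmemdiv]
      intro j hj
      exact ⟨j, by simp⟩
    rw [h] at h1
    exact one_ne_zero ((FractionalIdeal.mem_zero_iff _).mp h1)
  rw [FractionalIdeal.mem_div_iff_of_ne_zero h1Jne]
  constructor
  · intro h t ht
    have := h t ((hmemdiv t).mpr ht)
    rcases (FractionalIdeal.mem_one_iff _).mp this with ⟨a, ha⟩
    exact ⟨a, by rw [ha]; ring⟩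
  · intro h t ht
    rcases h t ((hmemdiv t).mp ht) with ⟨a, ha⟩
    exact (FractionalIdeal.mem_one_iff _).mpr ⟨a, by rw [ha]; ring⟩

lemma vmem_iff_of_ringHom {F F' : Type*} [Field F] [Field F']
    [Algebra R F] [Algebra R F'] (g : F →+* F')
    (hg : ∀ r : R, g (algebraMap R F r) = algebraMap R F' r)
    (hinj : Function.Injective (algebraMap R F))
    {J : Ideal R} (hJ : J ≠ ⊥) (x : R) : vmem R F J x ↔ vmem R F' J x := by
  obtain ⟨j0, hj0J, hj0⟩ := Submodule.exists_mem_ne_zero_of_ne_bot hJ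
  have hj0F : algebraMap R F j0 ≠ 0 := fun h => hj0 (hinj (by rw [h, map_zero]))
  have hj0F' : algebraMap R F' j0 ≠ 0 := by
    rw [← hg]; exact fun h => hj0F (g.injective (by rw [h, map_zero]))
  constructor
  · intro hv t' ht'
    obtain ⟨a, ha⟩ := ht' j0 hj0J
    set t : F := algebraMap R F a / algebraMap R F j0 with ht_def
    have hgt : g t = t' := by
      rw [ht_def, map_div₀, hg, hg, ha, mul_div_assoc, div_self hj0F', mul_one]
    have ht : ∀ j ∈ J, t * algebraMap R F j ∈ (algebraMap R F).range := by
      intro j hj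
      obtain ⟨c, hc⟩ := ht' j hj
      refine ⟨c, g.injective ?_⟩
      rw [hg, map_mul, hgt, hg, hc]
    obtain ⟨c, hc⟩ := hv t ht
    refine ⟨c, ?_⟩
    rw [← hg c, hc, map_mul, hgt, hg]
  · intro hv t ht
    have ht' : ∀ j ∈ J, g t * algebraMap R F' j ∈ (algebraMap R F').range := by
      intro j hj
      obtain ⟨c, hc⟩ := ht j hj
      exact ⟨c, by rw [← hg c, hc, map_mul, hg]⟩
    obtain ⟨c, hc⟩ := hv (g t) ht'
    refine ⟨c, g.injective ?_⟩
    rw [hg, hc, map_mul, hg]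

end AuxV

section AuxT

variable {R : Type*} [CommRing R] [IsDomain R]

lemma IsTIdeal.mem_of_vmem {F : Type*} [Field F] [Algebra R F] [IsFractionRing R F]
    {I : Ideal R} (hI : IsTIdeal R I) {J : Ideal R} (hfg : J.FG) (hJI : J ≤ I) (hJb : J ≠ ⊥)
    {x : R} (hx : vmem R F J x) : x ∈ I := by
  let g : FractionRing R →+* F := ((FractionRing.algEquiv R F : FractionRing R ≃ₐ[R] F) :
    FractionRing R →+* F)
  have hg : ∀ r : R, g (algebraMap R (FractionRing R) r) = algebraMap R F r := fun r =>
    (FractionRing.algEquiv R F).commutes r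
  have hinj : Function.Injective (algebraMap R (FractionRing R)) :=
    IsFractionRing.injective R (FractionRing R)
  exact hI x ⟨J, hfg, hJI, (mem_v_iff_vmem hJb x).mpr
    ((vmem_iff_of_ringHom g hg hinj hJb x).mpr hx)⟩

lemma exists_tmax {I : Ideal R} (hI : IsTIdeal R I) (htop : I ≠ ⊤) :
    ∃ m : Ideal R, I ≤ m ∧ IsTMax R m := by
  obtain ⟨m, hIm, hmem, hmax⟩ := zorn_le_nonempty₀ {J : Ideal R | IsTIdeal R J ∧ J ≠ ⊤}
    (fun c hcs hchain y hy => by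
      refine ⟨sSup c, ⟨?_, ?_⟩, fun z hz => le_sSup hz⟩
      · intro x ⟨J, hfg, hle, hmem⟩
        have hcomp := (Submodule.fg_iff_compact J).mp hfg
        rw [CompleteLattice.isCompactElement_iff_le_of_directed_sSup_le] at hcomp
        obtain ⟨I', hI'c, hJI'⟩ := hcomp c ⟨y, hy⟩ hchain.directedOn hle
        exact le_sSup hI'c ((hcs hI'c).1 x ⟨J, hfg, hJI', hmem⟩)
      · intro h
        have htfg : (⊤ : Ideal R).FG := ⟨{1}, by simp [Ideal.span_singleton_one]⟩
        have hcomp := (Submodule.fg_iff_compact _).mp htfg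
        rw [CompleteLattice.isCompactElement_iff_le_of_directed_sSup_le] at hcomp
        obtain ⟨I', hI'c, hI'⟩ := hcomp c ⟨y, hy⟩ hchain.directedOn h.ge
        exact (hcs hI'c).2 (top_le_iff.mp hI'))
    I ⟨hI, htop⟩
  exact ⟨m, hIm, hmem.1, hmem.2, fun J hJt hJtop hmJ =>
    le_antisymm (hmax ⟨hJt, hJtop⟩ hmJ) hmJ⟩

set_option maxHeartbeats 2000000 in
lemma IsTMax.isPrime {m : Ideal R} (hm : IsTMax R m) : m.IsPrime := by
  by_cases hbot : m = ⊥
  · exact hbot ▸ Ideal.bot_prime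
  set F := FractionRing R
  obtain ⟨j0, hj0m, hj0⟩ := Submodule.exists_mem_ne_zero_of_ne_bot hbot
  refine ⟨hm.2.1, ?_⟩
  intro x y hxy
  by_contra hcon
  push_neg at hcon
  obtain ⟨hx, hy⟩ := hcon
  have key : ∀ z : R, z ∉ m → ∃ Jz : Ideal R, Jz.FG ∧ Jz ≤ m ⊔ Ideal.span {z} ∧ Jz ≠ ⊥ ∧
      vmem R F Jz 1 := by
    intro z hz
    set I := m ⊔ Ideal.span {z} with hI
    set P : R → Prop := fun w => ∃ J : Ideal R, J.FG ∧ J ≤ I ∧ J ≠ ⊥ ∧ vmem R F J w with hP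
    set T : Ideal R :=
      { carrier := {w | P w}
        zero_mem' := ⟨Ideal.span {j0}, Submodule.fg_span (Set.finite_singleton j0),
          (Ideal.span_le.mpr (by simpa using le_sup_left (b := Ideal.span {z}) hj0m)),
          by simpa [Ideal.span_singleton_eq_bot] using hj0,
          fun t ht => by simpa using ⟨0, by simp⟩⟩
        add_mem' := by
          rintro w₁ w₂ ⟨J₁, hfg₁, hle₁, hb₁, hv₁⟩ ⟨J₂, hfg₂, hle₂, hb₂, hv₂⟩
          refine ⟨J₁ ⊔ J₂, Submodule.FG.sup hfg₁ hfg₂, sup_le hle₁ hle₂, ?_, ?_⟩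
          · intro h
            exact hb₁ (le_bot_iff.mp (h ▸ le_sup_left))
          · intro t ht
            obtain ⟨c₁, hc₁⟩ := hv₁ t (fun j hj => ht j (le_sup_left (a := J₁) hj))
            obtain ⟨c₂, hc₂⟩ := hv₂ t (fun j hj => ht j (le_sup_right (a := J₁) hj))
            exact ⟨c₁ + c₂, by rw [map_add, hc₁, hc₂, map_add, mul_add]⟩
        smul_mem' := by
          rintro r w ⟨J, hfg, hle, hb, hv⟩
          refine ⟨J, hfg, hle, hb, fun t ht => ?_⟩
          obtain ⟨c, hc⟩ := hv t ht
          exact ⟨r * c, by rw [map_mul, hc, smul_eq_mul, map_mul]; ring⟩ }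
    have hPmem : ∀ w : R, w ∈ T ↔ P w := fun w => Iff.rfl
    have hTt : IsTIdeal R T := by
      intro w ⟨J', hfg', hle', hmem'⟩
      by_cases hJ'b : J' = ⊥
      · subst hJ'b
        rw [show ((⊥ : Ideal R) : FractionalIdeal R⁰ F) = 0 by
            simp, FractionalIdeal.div_zero, FractionalIdeal.div_zero] at hmem'
        have : w = 0 := by
          have := (FractionalIdeal.mem_zero_iff _).mp hmem'
          exact IsFractionRing.injective R F (by simpa using this)
        rw [this]
        exact T.zero_mem
      have hv' : vmem R F J' w := by
        have h1 := (mem_v_iff_vmem hJ'b w).mp hmem'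
        exact h1
      obtain ⟨s, hs⟩ := hfg'
      -- J* : sum of witnesses for the generators, plus span {j0}
      classical
      have hgT : ∀ g ∈ s, P g := fun g hg => (hPmem g).mp (hle' (hs ▸ Ideal.subset_span hg))
      set f : R → Ideal R := fun g =>
        if h : P g then (Ideal.span {j0}) ⊔ h.choose else Ideal.span {j0} with hf
      have hfprop : ∀ g ∈ s, (f g).FG ∧ f g ≤ I ∧ f g ≠ ⊥ ∧ vmem R F (f g) g := by
        intro g hg
        have h := hgT g hg
        obtain ⟨hfg, hle, hb, hv⟩ := h.choose_spec
        rw [hf]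
        simp only [dif_pos h]
        refine ⟨Submodule.FG.sup (Submodule.fg_span (Set.finite_singleton j0)) hfg, sup_le
          (Ideal.span_le.mpr (by simpa using le_sup_left (b := Ideal.span {z}) hj0m)) hle, ?_, ?_⟩
        · intro hcon
          exact hb (le_bot_iff.mp (le_trans le_sup_right hcon.le))
        · intro t ht
          exact hv t (fun j hj => ht j (le_sup_right (a := Ideal.span {j0}) hj))
      have hsupfg : ∀ t : Finset R, (∀ g ∈ t, (f g).FG) → (t.sup f).FG := by
        intro t
        induction t using Finset.cons_induction with
        | empty => exact fun _ => ⟨∅, by simp⟩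
        | cons a t ha ih =>
          intro hall
          rw [Finset.sup_cons]
          exact Submodule.FG.sup (hall a (Finset.mem_cons_self a t))
            (ih fun g hg => hall g (Finset.mem_cons_of_mem hg))
      set Jstar : Ideal R := Ideal.span {j0} ⊔ s.sup f with hJstar
      have hJstarfg : Jstar.FG :=
        Submodule.FG.sup (Submodule.fg_span (Set.finite_singleton j0))
          (hsupfg s (fun g hg => (hfprop g hg).1))
      have hJstarle : Jstar ≤ I := by
        refine sup_le (Ideal.span_le.mpr (by simpa using le_sup_left (b := Ideal.span {z}) hj0m))
          (Finset.sup_le fun g hg => (hfprop g hg).2.1)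
      have hJstarb : Jstar ≠ ⊥ := by
        intro h
        have : Ideal.span {j0} = (⊥ : Ideal R) := le_bot_iff.mp (h ▸ le_sup_left)
        exact hj0 (by simpa [Ideal.span_singleton_eq_bot] using this)
      refine ⟨Jstar, hJstarfg, hJstarle, hJstarb, ?_⟩
      intro t ht
      -- t is admissible for every generator of J'
      have hgen : ∀ j ∈ J', t * algebraMap R F j ∈ (algebraMap R F).range := by
        intro j hj
        rw [← hs] at hj
        induction hj using Submodule.span_induction with
        | mem a ha =>
          have hva := (hfprop a ha).2.2.2
          exact hva t (fun j hj => ht j (le_sup_right (a := Ideal.span {j0})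
            ((Finset.le_sup ha : f a ≤ s.sup f) hj)))
        | zero => exact ⟨0, by simp⟩
        | add a b _ _ hia hib =>
          obtain ⟨c₁, hc₁⟩ := hia
          obtain ⟨c₂, hc₂⟩ := hib
          exact ⟨c₁ + c₂, by rw [map_add, hc₁, hc₂, map_add, mul_add]⟩
        | smul r a _ hia =>
          obtain ⟨c, hc⟩ := hia
          exact ⟨r * c, by rw [map_mul, hc, smul_eq_mul, map_mul]; ring⟩
      exact hv' t hgen
    have hmT : m ≤ T := by
      intro w hw
      refine (hPmem w).mpr ⟨Ideal.span {j0} ⊔ Ideal.span {w}, Submodule.FG.sup (Submodule.fg_span (Set.finite_singleton j0)) (Submodule.fg_span (Set.finite_singleton w)),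
        sup_le (Ideal.span_le.mpr (by simpa using le_sup_left (b := Ideal.span {z}) hj0m))
          (Ideal.span_le.mpr (by simpa using le_sup_left (b := Ideal.span {z}) hw)), ?_, ?_⟩
      · intro h
        have : Ideal.span {j0} = (⊥ : Ideal R) := le_bot_iff.mp (h ▸ le_sup_left)
        exact hj0 (by simpa [Ideal.span_singleton_eq_bot] using this)
      · intro t ht
        exact ht w (le_sup_right (a := Ideal.span {j0}) (Ideal.subset_span rfl))
    have hzT : z ∈ T := by
      refine (hPmem z).mpr ⟨Ideal.span {j0} ⊔ Ideal.span {z}, Submodule.FG.sup (Submodule.fg_span (Set.finite_singleton j0)) (Submodule.fg_span (Set.finite_singleton z)),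
        sup_le (Ideal.span_le.mpr (by simpa using le_sup_left (b := Ideal.span {z}) hj0m))
          le_sup_right, ?_, ?_⟩
      · intro h
        have : Ideal.span {j0} = (⊥ : Ideal R) := le_bot_iff.mp (h ▸ le_sup_left)
        exact hj0 (by simpa [Ideal.span_singleton_eq_bot] using this)
      · intro t ht
        exact ht z (le_sup_right (a := Ideal.span {j0}) (Ideal.subset_span rfl))
    have hTtop : T = ⊤ := by
      by_contra hTne
      have := hm.2.2 T hTt hTne hmT
      exact hz (this ▸ hzT)
    have h1T : (1 : R) ∈ T := hTtop ▸ Submodule.mem_top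
    exact (hPmem 1).mp h1T
  obtain ⟨Jx, hJxfg, hJxle, hJxb, hJxv⟩ := key x hx
  obtain ⟨Jy, hJyfg, hJyle, hJyb, hJyv⟩ := key y hy
  have hprod_le : Jx * Jy ≤ m := by
    calc Jx * Jy ≤ (m ⊔ Ideal.span {x}) * (m ⊔ Ideal.span {y}) := Ideal.mul_mono hJxle hJyle
    _ ≤ m := by
      rw [Ideal.sup_mul, Ideal.mul_sup, Ideal.mul_sup]
      refine sup_le (sup_le ?_ ?_) (sup_le ?_ ?_)
      · exact Ideal.mul_le_right
      · exact Ideal.mul_le_left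
      · exact Ideal.mul_le_right
      · rw [Ideal.span_singleton_mul_span_singleton]
        exact Ideal.span_le.mpr (by simpa using hxy)
  have hprod_b : Jx * Jy ≠ ⊥ := by
    intro h
    rcases Ideal.mul_eq_bot.mp h with h | h
    · exact hJxb h
    · exact hJyb h
  have hv1 : vmem R F (Jx * Jy) 1 := by
    intro t ht
    have hjx : ∀ j ∈ Jx, t * algebraMap R F j ∈ (algebraMap R F).range := by
      intro j hj
      have : ∀ j' ∈ Jy, (t * algebraMap R F j) * algebraMap R F j' ∈ (algebraMap R F).range := by
        intro j' hj'
        have := ht (j * j') (Ideal.mul_mem_mul hj hj')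
        rwa [map_mul, ← mul_assoc] at this
      have := hJyv (t * algebraMap R F j) this
      simpa using this
    have := hJxv t hjx
    simpa using this
  have h1m : (1 : R) ∈ m := hm.1.mem_of_vmem (F := F) (Submodule.FG.mul hJxfg hJyfg) hprod_le hprod_b hv1
  exact hm.2.1 ((Ideal.eq_top_iff_one m).mpr h1m)

end AuxT

section AuxTransfer

lemma valuationRing_of_ringEquiv {R S : Type*} [CommRing R] [IsDomain R] [CommRing S]
    [IsDomain S] (e : R ≃+* S) (h : ValuationRing R) : ValuationRing S := by
  refine { cond' := fun a b => ?_ }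
  obtain ⟨c, hc⟩ := @PreValuationRing.cond R _ h.toPreValuationRing (e.symm a) (e.symm b)
  refine ⟨e c, ?_⟩
  rcases hc with hc | hc
  · left
    have := congrArg e hc
    simpa using this
  · right
    have := congrArg e hc
    simpa using this

lemma valuationRing_locg_of_ringHom {R F F' : Type*} [CommRing R] [IsDomain R] [Field F]
    [Field F'] [Algebra R F] [Algebra R F'] (g : F →+* F')
    (hg : ∀ r : R, g (algebraMap R F r) = algebraMap R F' r)
    (hinj : Function.Injective (algebraMap R F))
    (p : PrimeSpectrum R) (h : ValuationRing (locg (K := F) p)) :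
    ValuationRing (locg (K := F') p) := by
  have hmem : ∀ x : locg (K := F) p, g (x : F) ∈ locg (K := F') p := by
    rintro ⟨x, a, b, hb, he⟩
    exact ⟨a, b, hb, by rw [← hg, ← hg, ← map_mul, he]⟩
  let φ : locg (K := F) p →+* locg (K := F') p :=
    RingHom.codRestrict (g.comp (locg (K := F) p).subtype) _ hmem
  have hbij : Function.Bijective φ := by
    constructor
    · intro x y hxy
      apply Subtype.ext
      apply g.injective
      exact congrArg Subtype.val hxy
    · rintro ⟨y, a, b, hb, he⟩
      have hb0 : b ≠ 0 := fun h => hb (h ▸ p.asIdeal.zero_mem)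
      have hbF : algebraMap R F b ≠ 0 := fun h => hb0 (hinj (by rw [h, map_zero]))
      have hbF' : algebraMap R F' b ≠ 0 := by
        rw [← hg]; exact fun h => hbF (g.injective (by rw [h, map_zero]))
      refine ⟨⟨algebraMap R F a / algebraMap R F b, a, b, hb, by
        field_simp⟩, ?_⟩
      apply Subtype.ext
      show g (algebraMap R F a / algebraMap R F b) = y
      rw [map_div₀, hg, hg]
      exact ((eq_div_iff hbF').mpr he).symm
  exact valuationRing_of_ringEquiv (RingEquiv.ofBijective φ hbij) h

end AuxTransfer

section AuxMin

variable {L : Type*} [Field L]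

lemma subring_val_min {ι : Type*} (W : Subring L) (hW : ValuationRing W)
    (g : ι → L) (hg : ∀ i, g i ∈ W) (s : Finset ι) (hne : s.Nonempty) :
    ∃ k ∈ s, ∀ i ∈ s, ∃ w ∈ W, g i = g k * w := by
  classical
  have hdiv : ∀ i j : ι, ∃ w ∈ W, g i * w = g j ∨ g j * w = g i := by
    intro i j
    obtain ⟨c, hc⟩ := @PreValuationRing.cond W _ hW.toPreValuationRing ⟨g i, hg i⟩ ⟨g j, hg j⟩
    refine ⟨(c : L), c.2, ?_⟩
    rcases hc with hc | hc
    · left; exact congrArg Subtype.val hc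
    · right; exact congrArg Subtype.val hc
  induction s using Finset.cons_induction with
  | empty => exact absurd hne (by simp)
  | cons a s ha ih =>
    rcases s.eq_empty_or_nonempty with rfl | hs
    · exact ⟨a, Finset.mem_cons_self a _, fun i hi => by
        rw [Finset.mem_cons] at hi
        rcases hi with rfl | hi
        · exact ⟨1, W.one_mem, by ring⟩
        · simp at hi⟩
    · obtain ⟨k, hk, hkdiv⟩ := ih hs
      obtain ⟨w, hwW, hw⟩ := hdiv a k
      rcases hw with hw | hw
      · -- g a divides g k, hence divides everything
        refine ⟨a, Finset.mem_cons_self a _, fun i hi => ?_⟩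
        rw [Finset.mem_cons] at hi
        rcases hi with rfl | hi
        · exact ⟨1, W.one_mem, by ring⟩
        · obtain ⟨w', hw'W, hw'⟩ := hkdiv i hi
          exact ⟨w * w', W.mul_mem hwW hw'W, by rw [hw', ← hw]; ring⟩
      · refine ⟨k, Finset.mem_cons_of_mem hk, fun i hi => ?_⟩
        rw [Finset.mem_cons] at hi
        rcases hi with rfl | hi
        · exact ⟨w, hwW, hw.symm⟩
        · exact hkdiv i hi

end AuxMin

section AuxLocal

variable {B L : Type*} [CommRing B] [Field L] [Algebra B L]

lemma locg_isUnit_of_num_notMem (hinj : Function.Injective (algebraMap B L))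
    (P : PrimeSpectrum B) {z : locg (K := L) P} {a b : B} (hb : b ∉ P.asIdeal)
    (he : (z : L) * algebraMap B L b = algebraMap B L a) (ha : a ∉ P.asIdeal) : IsUnit z := by
  have ha0 : a ≠ 0 := fun h => ha (h ▸ P.asIdeal.zero_mem)
  have haL : algebraMap B L a ≠ 0 := fun h => ha0 (hinj (by rw [h, map_zero]))
  refine isUnit_iff_exists_inv.mpr ⟨⟨algebraMap B L b / algebraMap B L a, b, a, ha, by
    field_simp⟩, ?_⟩
  apply Subtype.ext
  show (z : L) * (algebraMap B L b / algebraMap B L a) = 1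
  rw [← mul_div_assoc, he, div_self haL]

lemma locg_num_notMem_of_isUnit (hinj : Function.Injective (algebraMap B L))
    (P : PrimeSpectrum B) {z : locg (K := L) P} (hz : IsUnit z) {a b : B} (hb : b ∉ P.asIdeal)
    (he : (z : L) * algebraMap B L b = algebraMap B L a) : a ∉ P.asIdeal := by
  obtain ⟨w, hw⟩ := isUnit_iff_exists_inv.mp hz
  obtain ⟨c, d, hd, he'⟩ := w.2
  have hw' : (z : L) * (w : L) = 1 := by
    have := congrArg Subtype.val hw
    exact this
  have : algebraMap B L (a * c) = algebraMap B L (b * d) := by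
    rw [map_mul, map_mul, ← he, ← he']
    rw [show (z:L) * algebraMap B L b * ((w:L) * algebraMap B L d)
      = ((z:L) * (w:L)) * (algebraMap B L b * algebraMap B L d) by ring, hw', one_mul]
  have hacbd : a * c = b * d := hinj this
  intro haP
  have : b * d ∈ P.asIdeal := hacbd ▸ P.asIdeal.mul_mem_right c haP
  rcases P.2.mem_or_mem this with h | h
  · exact hb h
  · exact hd h

lemma locg_isLocalRing (hinj : Function.Injective (algebraMap B L)) (P : PrimeSpectrum B) :
    IsLocalRing (locg (K := L) P) := by
  have : Nontrivial (locg (K := L) P) := by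
    refine ⟨0, 1, fun h => ?_⟩
    have := congrArg Subtype.val h
    simpa using this
  refine IsLocalRing.of_nonunits_add ?_
  intro z₁ z₂ h₁ h₂
  obtain ⟨a₁, b₁, hb₁, he₁⟩ := z₁.2
  obtain ⟨a₂, b₂, hb₂, he₂⟩ := z₂.2
  have ha₁ : a₁ ∈ P.asIdeal := by
    by_contra ha
    exact h₁ (locg_isUnit_of_num_notMem hinj P hb₁ he₁ ha)
  have ha₂ : a₂ ∈ P.asIdeal := by
    by_contra ha
    exact h₂ (locg_isUnit_of_num_notMem hinj P hb₂ he₂ ha)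
  intro hu
  have hb12 : b₁ * b₂ ∉ P.asIdeal := fun h => (P.2.mem_or_mem h).elim hb₁ hb₂
  have hesum : ((z₁ + z₂ : locg (K := L) P) : L) * algebraMap B L (b₁ * b₂)
      = algebraMap B L (a₁ * b₂ + a₂ * b₁) := by
    rw [Subring.coe_add, map_mul, map_add, map_mul, map_mul]
    linear_combination (algebraMap B L b₂) * he₁ + (algebraMap B L b₁) * he₂
  have := locg_num_notMem_of_isUnit hinj P hu hb12 hesum
  exact this (P.asIdeal.add_mem (P.asIdeal.mul_mem_right b₂ ha₁) (P.asIdeal.mul_mem_right b₁ ha₂))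

end AuxLocal

section AuxIC

variable {B L : Type*} [CommRing B] [IsDomain B] [Field L] [Algebra B L] [IsFractionRing B L]
  [IsIntegrallyClosed B]

set_option maxHeartbeats 1000000 in
lemma locg_int_closed (P : PrimeSpectrum B) (x : L) (n : ℕ) (hn : 1 ≤ n) (c : ℕ → L)
    (hc : ∀ i, c i ∈ locg (K := L) P)
    (heq : x ^ n = ∑ i ∈ Finset.range n, c i * x ^ i) : x ∈ locg (K := L) P := by
  classical
  choose num den hden he using fun i => (hc i : ∃ a b : B, b ∉ P.asIdeal ∧
    c i * algebraMap B L b = algebraMap B L a)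
  set s : B := ∏ i ∈ Finset.range n, den i with hs
  have hsP : s ∉ P.asIdeal := by
    rw [hs]
    refine Finset.prod_induction den (· ∉ P.asIdeal) ?_ ?_ ?_
    · intro a b ha hb h
      exact (P.2.mem_or_mem h).elim ha hb
    · exact fun h => P.2.ne_top ((Ideal.eq_top_iff_one _).2 h)
    · intro i _; exact hden i
  have hcs : ∀ i ∈ Finset.range n, c i * algebraMap B L s
      = algebraMap B L (num i * ∏ j ∈ (Finset.range n).erase i, den j) := by
    intro i hi
    rw [hs, ← Finset.mul_prod_erase _ den hi, map_mul, ← mul_assoc, he i, ← map_mul]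
  set y : L := algebraMap B L s * x with hy
  have hyeq : y ^ n = ∑ i ∈ Finset.range n,
      algebraMap B L ((num i * ∏ j ∈ (Finset.range n).erase i, den j) * s ^ (n - 1 - i)) * y ^ i := by
    rw [hy, mul_pow, heq, Finset.mul_sum]
    refine Finset.sum_congr rfl ?_
    intro i hi
    have hin : i < n := Finset.mem_range.mp hi
    have hexp : n - 1 - i + 1 + i = n := by omega
    rw [map_mul, ← hcs i hi, mul_pow]
    rw [show (algebraMap B L s) ^ n = (algebraMap B L s) ^ (n - 1 - i) * algebraMap B L s
      * (algebraMap B L s) ^ i by rw [← pow_succ, ← pow_add, hexp], map_pow]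
    ring
  -- y is integral over B
  set f : ℕ → B := fun i => (num i * ∏ j ∈ (Finset.range n).erase i, den j) * s ^ (n - 1 - i)
    with hf
  set q : Polynomial B := Polynomial.X ^ n
    - ∑ i ∈ Finset.range n, Polynomial.C (f i) * Polynomial.X ^ i with hq
  have hqmonic : q.Monic := by
    refine Polynomial.monic_X_pow_sub ?_
    refine lt_of_le_of_lt (Polynomial.degree_sum_le _ _) ?_
    rw [Finset.sup_lt_iff (by exact_mod_cast WithBot.bot_lt_coe n)]
    intro i hi
    refine lt_of_le_of_lt (Polynomial.degree_C_mul_X_pow_le _ _) ?_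
    exact_mod_cast Finset.mem_range.mp hi
  have hqeval : Polynomial.aeval y q = 0 := by
    rw [hq, map_sub, map_pow, Polynomial.aeval_X, map_sum]
    simp only [map_mul, map_pow, Polynomial.aeval_C, Polynomial.aeval_X]
    rw [sub_eq_zero, hyeq]
  have hyint : IsIntegral B y := ⟨q, hqmonic, by rwa [Polynomial.aeval_def] at hqeval⟩
  obtain ⟨b0, hb0⟩ := IsIntegrallyClosed.isIntegral_iff.mp hyint
  exact ⟨b0, s, hsP, by rw [mul_comm] at hy; rw [← hy, hb0]⟩

end AuxIC

section AuxInd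

variable {L : Type*} [Field L]

set_option maxHeartbeats 1000000 in
lemma ind_step (R : Subring L) (V : ValuationSubring L)
    (hRV : ∀ r ∈ R, r ∈ V)
    (hdom : ∀ (r : L) (hr : r ∈ R) (hv : r ∈ V), IsUnit (⟨r, hv⟩ : V) → ∃ r' ∈ R, r * r' = 1)
    (hICS : ∀ (x : L) (n : ℕ), 1 ≤ n → ∀ c : ℕ → L, (∀ i, c i ∈ R) →
      x ^ n = ∑ i ∈ Finset.range n, c i * x ^ i → x ∈ R) :
    ∀ n : ℕ, 1 ≤ n → ∀ x : L, x ≠ 0 → x ∈ V → ∀ w : ℕ → L, ∀ hw : (∀ i, w i ∈ R),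
    (∃ k, k ≤ n ∧ IsUnit (⟨w k, hRV _ (hw k)⟩ : V)) →
    (∑ i ∈ Finset.range (n + 1), w i * x ^ i = 0) → x ∈ R ∨ x⁻¹ ∈ R := by
  intro n hn
  induction n, hn using Nat.le_induction with
  | base =>
    intro x hx0 hxV w hw hk hrel
    rw [Finset.sum_range_succ, Finset.sum_range_one] at hrel
    by_cases hu1 : IsUnit (⟨w 1, hRV _ (hw 1)⟩ : V)
    · obtain ⟨r', hr', hinv⟩ := hdom _ (hw 1) _ hu1
      left
      have h1 : w 1 * x = -(w 0) := by linear_combination hrel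
      have hxval : x = -(w 0 * r') := by
        calc x = (w 1 * r') * x := by rw [hinv, one_mul]
        _ = r' * (w 1 * x) := by ring
        _ = -(w 0 * r') := by rw [h1]; ring
      rw [hxval]
      exact R.neg_mem (R.mul_mem (hw 0) hr')
    · obtain ⟨k, hk1, hku⟩ := hk
      have hk0 : k = 0 := by
        rcases Nat.le_one_iff_eq_zero_or_eq_one.mp hk1 with h | h
        · exact h
        · exact absurd (h ▸ hku) hu1
      subst hk0
      obtain ⟨r', hr', hinv⟩ := hdom _ (hw 0) _ hku
      right
      have h1 : w 1 * x = -(w 0) := by linear_combination hrel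
      have hmain : (-(w 1 * r')) * x = 1 := by
        calc (-(w 1 * r')) * x = -(r' * (w 1 * x)) := by ring
        _ = r' * w 0 := by rw [h1]; ring
        _ = 1 := by rw [mul_comm]; exact hinv
      rw [← eq_inv_of_mul_eq_one_left hmain]
      exact R.neg_mem (R.mul_mem (hw 1) hr')
  | succ n hn ih =>
    intro x hx0 hxV w hw hk hrel
    by_cases hu : IsUnit (⟨w (n+1), hRV _ (hw (n+1))⟩ : V)
    · obtain ⟨r', hr', hinv⟩ := hdom _ (hw (n+1)) _ hu
      left
      refine hICS x (n+1) (by omega) (fun i => -(r' * w i))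
        (fun i => R.neg_mem (R.mul_mem hr' (hw i))) ?_
      rw [Finset.sum_range_succ] at hrel
      have h1 : w (n+1) * x^(n+1) = -∑ i ∈ Finset.range (n+1), w i * x ^ i := by
        linear_combination hrel
      calc x ^ (n+1) = (w (n+1) * r') * x ^ (n+1) := by rw [hinv, one_mul]
      _ = r' * (w (n+1) * x^(n+1)) := by ring
      _ = r' * -∑ i ∈ Finset.range (n+1), w i * x ^ i := by rw [h1]
      _ = ∑ i ∈ Finset.range (n+1), -(r' * w i) * x ^ i := by
          rw [mul_neg, Finset.mul_sum, ← Finset.sum_neg_distrib]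
          exact Finset.sum_congr rfl fun i _ => by ring
    · have hzR : w (n+1) * x ∈ R := by
        refine hICS (w (n+1) * x) (n+1) (by omega)
          (fun i => -(w i * w (n+1) ^ (n - i)))
          (fun i => R.neg_mem (R.mul_mem (hw i) (R.pow_mem (hw (n+1)) _))) ?_
        rw [Finset.sum_range_succ] at hrel
        have h1 : w (n+1) * x^(n+1) = -∑ i ∈ Finset.range (n+1), w i * x ^ i := by
          linear_combination hrel
        calc (w (n+1) * x) ^ (n+1) = w (n+1) ^ n * (w (n+1) * x ^ (n+1)) := by
              rw [mul_pow]; ring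
        _ = w (n+1) ^ n * -∑ i ∈ Finset.range (n+1), w i * x ^ i := by rw [h1]
        _ = ∑ i ∈ Finset.range (n+1), -(w i * w (n+1) ^ (n - i)) * (w (n+1) * x) ^ i := by
            rw [mul_neg, Finset.mul_sum, ← Finset.sum_neg_distrib]
            refine Finset.sum_congr rfl fun i hi => ?_
            have hin : i ≤ n := Nat.lt_succ_iff.mp (Finset.mem_range.mp hi)
            rw [mul_pow]
            rw [show w (n+1) ^ n = w (n+1) ^ (n - i) * w (n+1) ^ i by
              rw [← pow_add]; congr 1; omega]
            ring
      set z := w (n+1) * x with hz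
      have hzV : z ∈ V := hRV _ hzR
      have hznonunit : ¬ IsUnit (⟨z, hzV⟩ : V) := by
        intro hzu
        apply hu
        have heq : (⟨z, hzV⟩ : V) = ⟨w (n+1), hRV _ (hw (n+1))⟩ * ⟨x, hxV⟩ := by
          apply Subtype.ext; rfl
        rw [heq] at hzu
        exact isUnit_of_mul_isUnit_left hzu
      set w' : ℕ → L := fun i => if i = n then w n + z else w i with hw'
      have hw'R : ∀ i, w' i ∈ R := by
        intro i; rw [hw']; dsimp only
        split
        · exact R.add_mem (hw n) hzR
        · exact hw i
      have hrel' : ∑ i ∈ Finset.range (n + 1), w' i * x ^ i = 0 := by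
        rw [Finset.sum_range_succ]
        have e1 : ∑ i ∈ Finset.range n, w' i * x ^ i = ∑ i ∈ Finset.range n, w i * x ^ i := by
          refine Finset.sum_congr rfl fun i hi => ?_
          rw [hw']; dsimp only
          rw [if_neg (Nat.ne_of_lt (Finset.mem_range.mp hi))]
        rw [e1, hw']; dsimp only; rw [if_pos rfl, hz]
        have hthis := hrel
        rw [Finset.sum_range_succ, Finset.sum_range_succ] at hthis
        linear_combination hthis
      obtain ⟨k, hkle, hku⟩ := hk
      have hk' : ∃ k', k' ≤ n ∧ IsUnit (⟨w' k', hRV _ (hw'R k')⟩ : V) := by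
        by_cases hkn1 : k = n+1
        · exact absurd (hkn1 ▸ hku) hu
        have hkn : k ≤ n := by omega
        by_cases hkeqn : k = n
        · refine ⟨n, le_rfl, ?_⟩
          rw [hkeqn] at hku
          by_contra hnon
          have h1 : (⟨w' n, hRV _ (hw'R n)⟩ : V) ∈ IsLocalRing.maximalIdeal V := by
            rwa [IsLocalRing.mem_maximalIdeal, mem_nonunits_iff]
          have h2 : (⟨z, hzV⟩ : V) ∈ IsLocalRing.maximalIdeal V := by
            rwa [IsLocalRing.mem_maximalIdeal, mem_nonunits_iff]
          have h3 : (⟨w n, hRV _ (hw n)⟩ : V)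
              = ⟨w' n, hRV _ (hw'R n)⟩ - ⟨z, hzV⟩ := by
            apply Subtype.ext
            show w n = w' n - z
            rw [hw']; dsimp only; rw [if_pos rfl]; ring
          have h4 : (⟨w n, hRV _ (hw n)⟩ : V) ∈ IsLocalRing.maximalIdeal V := by
            rw [h3]; exact Submodule.sub_mem _ h1 h2
          rw [IsLocalRing.mem_maximalIdeal, mem_nonunits_iff] at h4
          exact h4 hku
        · refine ⟨k, hkn, ?_⟩
          have heqwk : w' k = w k := by rw [hw']; dsimp only; rw [if_neg hkeqn]
          have heqsub : (⟨w' k, hRV _ (hw'R k)⟩ : V) = ⟨w k, hRV _ (hw k)⟩ :=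
            Subtype.ext heqwk
          rw [heqsub]
          exact hku
      exact ih x hx0 hxV w' hw'R hk' hrel'

end AuxInd

set_option maxHeartbeats 4000000 in
theorem isPvMD_of_algebraic_extension {A B K L : Type*} [CommRing A] [IsDomain A]
    [CommRing B] [IsDomain B] [Field K] [Field L]
    [Algebra A K] [IsFractionRing A K] [Algebra B L] [IsFractionRing B L]
    [Algebra K L] [Algebra.IsAlgebraic K L] [Algebra A B] [Algebra A L]
    [IsScalarTower A K L] [IsScalarTower A B L]
    (hA : IsPvMD A) (hB : IsIntegrallyClosed B)
    (Y : Set (PrimeSpectrum B)) (hrep : IsEssentialRep B Y)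
    (hcent : ∀ q ∈ Y, (Ideal.comap (algebraMap A B) (PrimeSpectrum.asIdeal q)).IsPrime ∧
      IsTIdeal A (Ideal.comap (algebraMap A B) (PrimeSpectrum.asIdeal q))) :
    IsPvMD B := by
  intro M hMt hMp
  classical
  have hBinj : Function.Injective (algebraMap B L) := IsFractionRing.injective B L
  have hAKinj : Function.Injective (algebraMap A K) := IsFractionRing.injective A K
  have hALinj : Function.Injective (algebraMap A L) := by
    rw [IsScalarTower.algebraMap_eq A K L]
    exact (algebraMap K L).injective.comp hAKinj
  have hABL : ∀ a : A, algebraMap B L (algebraMap A B a) = algebraMap A L a := fun a =>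
    (IsScalarTower.algebraMap_apply A B L a).symm
  have hABinj : Function.Injective (algebraMap A B) := fun a b h =>
    hALinj (by rw [← hABL, ← hABL, h])
  -- comparison maps
  set gA : FractionRing A →+* L :=
    (algebraMap K L).comp ((FractionRing.algEquiv A K).toRingEquiv.toRingHom) with hgAdef
  have hgA : ∀ a : A, gA (algebraMap A (FractionRing A) a) = algebraMap A L a := by
    intro a
    rw [hgAdef]
    simp only [RingHom.comp_apply, RingEquiv.toRingHom_eq_coe, RingHom.coe_coe,
      AlgEquiv.coe_ringEquiv]
    rw [show (FractionRing.algEquiv A K) ((algebraMap A (FractionRing A)) a)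
      = algebraMap A K a from (FractionRing.algEquiv A K).commutes a]
    exact (IsScalarTower.algebraMap_apply A K L a).symm
  set eB : FractionRing B ≃ₐ[B] L := FractionRing.algEquiv B L with heBdef
  set gB : L →+* FractionRing B := eB.symm.toRingEquiv.toRingHom with hgBdef
  have heB : ∀ b : B, eB.symm (algebraMap B L b) = algebraMap B (FractionRing B) b := by
    intro b
    have h0 : algebraMap B L b = eB (algebraMap B (FractionRing B) b) := (eB.commutes b).symm
    rw [h0, eB.symm_apply_apply]
  have hgB : ∀ b : B, gB (algebraMap B L b) = algebraMap B (FractionRing B) b := heB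
  -- intersection property over L
  have hint : ∀ x : L, (∀ q ∈ Y, x ∈ locg (K := L) q) → x ∈ (algebraMap B L).range := by
    intro x hx
    have hmem : eB.symm x ∈ (⨅ q ∈ Y, locg (K := FractionRing B) q) := by
      refine Subring.mem_iInf.mpr fun q => Subring.mem_iInf.mpr fun hq => ?_
      obtain ⟨a, b, hb, he⟩ := hx q hq
      refine ⟨a, b, hb, ?_⟩
      have h1 := congrArg (⇑eB.symm) he
      rw [map_mul, heB, heB] at h1
      exact h1
    rw [hrep.2] at hmem
    obtain ⟨b, hb⟩ := hmem
    refine ⟨b, ?_⟩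
    have h2 := congrArg (⇑eB) hb
    rw [eB.apply_symm_apply] at h2
    rw [← h2]
    exact (eB.commutes b).symm
  -- valuation overrings coming from A
  have getW : ∀ pA : Ideal A, IsTIdeal A pA → pA ≠ ⊤ → ∃ (m : Ideal A) (hmp : m.IsPrime),
      pA ≤ m ∧ ValuationRing (locg (K := L) (⟨m, hmp⟩ : PrimeSpectrum A)) := by
    intro pA hpt hptop
    obtain ⟨m, hpm, hmmax⟩ := exists_tmax hpt hptop
    have hmp : m.IsPrime := hmmax.isPrime
    exact ⟨m, hmp, hpm, valuationRing_locg_of_ringHom gA hgA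
      (IsFractionRing.injective A (FractionRing A)) ⟨m, hmp⟩ (hA m hmmax hmp)⟩
  -- the center of M in A
  haveI := hMp
  set p : Ideal A := Ideal.comap (algebraMap A B) M with hpdef
  have hpprime : p.IsPrime := Ideal.IsPrime.comap _
  -- CORE : p is a t-ideal of A
  have hpt : IsTIdeal A p := by
    intro x hx
    obtain ⟨J0, hfg, hle, hmem⟩ := hx
    by_cases hJ0b : J0 = ⊥
    · subst hJ0b
      rw [show ((⊥ : Ideal A) : FractionalIdeal A⁰ (FractionRing A)) = 0 by simp,
        FractionalIdeal.div_zero, FractionalIdeal.div_zero] at hmem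
      have hx0 : x = 0 := IsFractionRing.injective A (FractionRing A)
        (by simpa using (FractionalIdeal.mem_zero_iff _).mp hmem)
      rw [hx0]; exact p.zero_mem
    have hv : vmem A L J0 x := (vmem_iff_of_ringHom gA hgA
      (IsFractionRing.injective A (FractionRing A)) hJ0b x).mp ((mem_v_iff_vmem hJ0b x).mp hmem)
    obtain ⟨j0, hj0J, hj0⟩ := Submodule.exists_mem_ne_zero_of_ne_bot hJ0b
    have hJ0Bb : J0.map (algebraMap A B) ≠ ⊥ := by
      intro h
      have hmm : algebraMap A B j0 ∈ J0.map (algebraMap A B) := Ideal.mem_map_of_mem _ hj0J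
      rw [h] at hmm
      exact hj0 (hABinj (by simpa using hmm))
    have hJ0Ble : J0.map (algebraMap A B) ≤ M := Ideal.map_le_iff_le_comap.mpr hle
    obtain ⟨s, hsJ0⟩ := hfg
    have hsne : s.Nonempty := by
      rcases Finset.eq_empty_or_nonempty s with rfl | h
      · exact absurd (by simpa using hsJ0.symm) hJ0b
      · exact h
    have hvB : vmem B L (J0.map (algebraMap A B)) (algebraMap A B x) := by
      intro t ht
      have htA : ∀ a0 ∈ J0, t * algebraMap A L a0 ∈ (algebraMap B L).range := by
        intro a0 ha0
        have h1 := ht (algebraMap A B a0) (Ideal.mem_map_of_mem _ ha0)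
        rwa [hABL] at h1
      rw [hABL x]
      refine hint _ (fun q hq => ?_)
      obtain ⟨hqprime, hqt⟩ := hcent q hq
      obtain ⟨m, hmp, hpqm, hWval⟩ := getW _ hqt hqprime.ne_top
      obtain ⟨a0, ha0s, hmin⟩ := subring_val_min (locg (K := L) (⟨m, hmp⟩ : PrimeSpectrum A))
        hWval (fun a : A => algebraMap A L a) (fun a => algebraMap_mem_locg _ a) s hsne
      have ha0J0 : a0 ∈ J0 := hsJ0 ▸ Ideal.subset_span ha0s
      have ha0ne : algebraMap A L a0 ≠ 0 := by
        intro h0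
        apply hJ0b
        rw [← hsJ0, Ideal.span_eq_bot]
        intro b hb
        obtain ⟨w, hwW, hw⟩ := hmin b hb
        exact hALinj (by rw [hw, h0, zero_mul, map_zero])
      have hden : ∀ b : A, ∃ c d : A, d ∉ m ∧ (b ∈ s → algebraMap A L b * algebraMap A L d
          = algebraMap A L a0 * algebraMap A L c) := by
        intro b
        by_cases hb : b ∈ s
        · obtain ⟨w, hwW, hw⟩ := hmin b hb
          obtain ⟨c, d, hd, hwd⟩ := hwW
          exact ⟨c, d, hd, fun _ => by rw [hw, mul_assoc, hwd]⟩
        · exact ⟨0, 1, fun h1 => hmp.ne_top ((Ideal.eq_top_iff_one _).2 h1),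
            fun h => absurd h hb⟩
      choose cf df hdf hef using hden
      set D : A := ∏ b ∈ s, df b with hD
      have hDm : D ∉ m := by
        rw [hD]
        refine Finset.prod_induction df (· ∉ m) ?_ ?_ ?_
        · intro u v hu hv huv; exact (hmp.mem_or_mem huv).elim hu hv
        · exact fun h => hmp.ne_top ((Ideal.eq_top_iff_one _).2 h)
        · intro b _; exact hdf b
      set u : L := algebraMap A L D / algebraMap A L a0 with hu
      have hugen : ∀ b ∈ s, u * algebraMap A L b ∈ (algebraMap A L).range := by
        intro b hb
        refine ⟨cf b * ∏ j ∈ s.erase b, df j, ?_⟩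
        have he1 := hef b hb
        have hmapD : algebraMap A L D
            = algebraMap A L (df b) * ∏ j ∈ s.erase b, algebraMap A L (df j) := by
          rw [hD, ← Finset.mul_prod_erase _ df hb, map_mul, map_prod]
        rw [hu, div_mul_eq_mul_div, eq_div_iff ha0ne, map_mul, map_prod, hmapD]
        linear_combination -(∏ j ∈ s.erase b, algebraMap A L (df j)) * he1
      have huall : ∀ j ∈ J0, u * algebraMap A L j ∈ (algebraMap A L).range := by
        intro j hj
        rw [← hsJ0] at hj
        induction hj using Submodule.span_induction with
        | mem a ha => exact hugen a ha
        | zero => exact ⟨0, by simp⟩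
        | add a b _ _ hia hib =>
          obtain ⟨c₁, hc₁⟩ := hia; obtain ⟨c₂, hc₂⟩ := hib
          exact ⟨c₁ + c₂, by rw [map_add, hc₁, hc₂, map_add, mul_add]⟩
        | smul r a _ hia =>
          obtain ⟨c, hc⟩ := hia
          exact ⟨r * c, by rw [map_mul, hc, smul_eq_mul, map_mul]; ring⟩
      obtain ⟨cx, hcx⟩ := hv u huall
      obtain ⟨b1, hb1⟩ := htA a0 ha0J0
      refine ⟨b1 * algebraMap A B cx, algebraMap A B D, ?_, ?_⟩
      · intro hmm
        exact hDm (hpqm (Ideal.mem_comap.mpr hmm))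
      · rw [map_mul, hABL D, hABL cx, hb1, hcx, hu]
        field_simp
    have hxM : algebraMap A B x ∈ M := hMt.1.mem_of_vmem (F := L)
      (Ideal.FG.map ⟨s, hsJ0⟩ _) hJ0Ble hJ0Bb hvB
    exact Ideal.mem_comap.mpr hxM
  -- ENDGAME
  obtain ⟨mA, hmAp, hpmA, hWval⟩ := getW p hpt hpprime.ne_top
  set W : Subring L := locg (K := L) (⟨mA, hmAp⟩ : PrimeSpectrum A) with hWdef
  set RM : Subring L := locg (K := L) (⟨M, hMp⟩ : PrimeSpectrum B) with hRMdef
  have hWR : ∀ w' ∈ W, w' ∈ RM := by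
    rintro w' ⟨a, b, hb, he⟩
    refine ⟨algebraMap A B a, algebraMap A B b, ?_, ?_⟩
    · intro hmm
      exact hb (hpmA (Ideal.mem_comap.mpr hmm))
    · rw [hABL, hABL]; exact he
  have hRMloc : IsLocalRing RM := locg_isLocalRing hBinj _
  obtain ⟨V, hsub, hlochom⟩ :=
    (LocalSubring.mk RM (isLocalRing := hRMloc)).exists_le_valuationSubring
  have hRV : ∀ r ∈ RM, r ∈ V := fun r hr => hsub hr
  have hdom : ∀ (r : L), r ∈ RM → ∀ (hv : r ∈ V), IsUnit (⟨r, hv⟩ : V) →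
      ∃ r' ∈ RM, r * r' = 1 := by
    intro r hr hv hunit
    have h1 : IsUnit (Subring.inclusion hsub ⟨r, hr⟩) := by
      have : Subring.inclusion hsub ⟨r, hr⟩ = (⟨r, hv⟩ : V) := Subtype.ext rfl
      rw [this]; exact hunit
    have hu2 : IsUnit (⟨r, hr⟩ : RM) := hlochom.map_nonunit _ h1
    obtain ⟨v, hv1⟩ := hu2
    refine ⟨(((v⁻¹ : RMˣ) : RM) : L), ((v⁻¹ : RMˣ) : RM).2, ?_⟩
    have hvr : ((v : RM) : L) = r := congrArg Subtype.val hv1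
    have h4 : (v : RM) * ((v⁻¹ : RMˣ) : RM) = (1 : RM) := v.mul_inv
    have h5 := congrArg (Subtype.val : RM → L) h4
    push_cast at h5
    rw [hvr] at h5
    exact h5
  have hICS : ∀ (x : L) (n : ℕ), 1 ≤ n → ∀ c : ℕ → L, (∀ i, c i ∈ RM) →
      x ^ n = ∑ i ∈ Finset.range n, c i * x ^ i → x ∈ RM := fun x n hn c hc he =>
    locg_int_closed _ x n hn c hc he
  have hsubclaim : ∀ x : L, x ≠ 0 → x ∈ V → x ∈ RM ∨ x⁻¹ ∈ RM := by
    intro x hx0 hxV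
    have halg : IsAlgebraic A x :=
      (IsFractionRing.isAlgebraic_iff A K L).mpr (Algebra.IsAlgebraic.isAlgebraic x)
    obtain ⟨P, hP0, hPx⟩ := halg
    set n := P.natDegree with hn
    have hn1 : 1 ≤ n := by
      by_contra h
      have hn0 : P.natDegree = 0 := by omega
      have hPC : P = Polynomial.C (P.coeff 0) := Polynomial.eq_C_of_natDegree_eq_zero hn0
      rw [hPC] at hPx
      rw [Polynomial.aeval_C] at hPx
      have : P.coeff 0 = 0 := hALinj (by rw [hPx, map_zero])
      rw [this, map_zero] at hPC
      exact hP0 hPC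
    have hrel0 : ∑ i ∈ Finset.range (n + 1), algebraMap A L (P.coeff i) * x ^ i = 0 := by
      have h1 := Polynomial.aeval_eq_sum_range (p := P) x
      rw [hPx] at h1
      simp_rw [Algebra.smul_def] at h1
      exact h1.symm
    have hctop : P.coeff n ≠ 0 := by
      rw [hn]
      exact Polynomial.leadingCoeff_ne_zero.mpr hP0
    obtain ⟨k, hks, hmin⟩ := subring_val_min W hWval
      (fun i : ℕ => algebraMap A L (P.coeff i)) (fun i => algebraMap_mem_locg _ _)
      (Finset.range (n + 1)) ⟨0, by simp⟩
    have hak : algebraMap A L (P.coeff k) ≠ 0 := by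
      intro h0
      obtain ⟨w, hwW, hw⟩ := hmin n (by simp)
      exact hctop (hALinj (by rw [hw, h0, zero_mul, map_zero]))
    have hminT : ∀ i : ℕ, ∃ w, w ∈ W ∧ (i ∈ Finset.range (n + 1) →
        algebraMap A L (P.coeff i) = algebraMap A L (P.coeff k) * w) := by
      intro i
      by_cases hi : i ∈ Finset.range (n + 1)
      · obtain ⟨w, h1, h2⟩ := hmin i hi; exact ⟨w, h1, fun _ => h2⟩
      · exact ⟨1, W.one_mem, fun h => absurd h hi⟩
    choose wf hwfW hwf using hminT
    have hwfR : ∀ i, wf i ∈ RM := fun i => hWR _ (hwfW i)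
    have hrel : ∑ i ∈ Finset.range (n + 1), wf i * x ^ i = 0 := by
      have hmulrel : algebraMap A L (P.coeff k) * ∑ i ∈ Finset.range (n + 1), wf i * x ^ i
          = ∑ i ∈ Finset.range (n + 1), algebraMap A L (P.coeff i) * x ^ i := by
        rw [Finset.mul_sum]
        refine Finset.sum_congr rfl fun i hi => ?_
        rw [← mul_assoc, ← hwf i hi]
      have h2 := hmulrel.trans hrel0
      rcases mul_eq_zero.mp h2 with h | h
      · exact absurd h hak
      · exact h
    have hwfk1 : wf k = 1 := by
      have h1 := hwf k hks
      exact (mul_left_cancel₀ hak (by rw [mul_one, ← h1])).symm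
    have hunit : ∃ kk, kk ≤ n ∧ IsUnit (⟨wf kk, hRV _ (hwfR kk)⟩ : V) := by
      refine ⟨k, Nat.lt_succ_iff.mp (Finset.mem_range.mp hks), ?_⟩
      have h1 : (⟨wf k, hRV _ (hwfR k)⟩ : V) = 1 := by
        apply Subtype.ext
        simp [hwfk1]
      rw [h1]; exact isUnit_one
    exact ind_step RM V hRV hdom hICS n hn1 x hx0 hxV wf hwfR hunit hrel
  have hVR : ValuationRing RM := by
    refine { cond' := fun a b => ?_ }
    by_cases hb0 : (b : L) = 0
    · refine ⟨0, Or.inl (Subtype.ext ?_)⟩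
      show (a : L) * ((0 : RM) : L) = (b : L)
      rw [hb0]; simp
    by_cases ha0 : (a : L) = 0
    · refine ⟨0, Or.inr (Subtype.ext ?_)⟩
      show (b : L) * ((0 : RM) : L) = (a : L)
      rw [ha0]; simp
    have hx0 : (a : L) / (b : L) ≠ 0 := div_ne_zero ha0 hb0
    rcases V.mem_or_inv_mem ((a : L) / (b : L)) with hmem | hmem
    · rcases hsubclaim _ hx0 hmem with h | h
      · refine ⟨⟨_, h⟩, Or.inr (Subtype.ext ?_)⟩
        show (b : L) * ((a : L) / (b : L)) = (a : L)
        field_simp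
      · refine ⟨⟨_, h⟩, Or.inl (Subtype.ext ?_)⟩
        show (a : L) * ((a : L) / (b : L))⁻¹ = (b : L)
        rw [inv_div]
        field_simp
    · have hx0' : ((a : L) / (b : L))⁻¹ ≠ 0 := inv_ne_zero hx0
      rcases hsubclaim _ hx0' hmem with h | h
      · refine ⟨⟨_, h⟩, Or.inl (Subtype.ext ?_)⟩
        show (a : L) * ((a : L) / (b : L))⁻¹ = (b : L)
        rw [inv_div]
        field_simp
      · rw [inv_inv] at h
        refine ⟨⟨_, h⟩, Or.inr (Subtype.ext ?_)⟩
        show (b : L) * ((a : L) / (b : L)) = (a : L)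
        field_simp
  exact valuationRing_locg_of_ringHom gB hgB hBinj ⟨M, hMp⟩ hVR
end

section
/- Let D₁, …, Dₙ be Prüfer v-multiplication domains and D := D₁ ∩ ⋯ ∩ Dₙ. Suppose D is essential with respect to {D₁, …, Dₙ}, i.e., the canonical representation {(Dᵢ)_q : q ∈ t-Spec(Dᵢ), 1 ≤ i ≤ n} of D is an essential representation (each member is a localization of D at a prime and their intersection is D). Then D is a Prüfer v-multiplication domain. -/
open scoped nonZeroDivisors

section Aux

open FractionalIdeal

variable {R : Type*} [CommRing R] [IsDomain R]

theorem one_mem_oneDiv {I : FractionalIdeal R⁰ (FractionRing R)} (h0 : I ≠ 0) (h1 : I ≤ 1) :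
    (1 : FractionRing R) ∈ (1 / I : FractionalIdeal R⁰ (FractionRing R)) := by
  rw [mem_div_iff_of_ne_zero h0]
  intro y hy
  rw [one_mul]
  exact h1 hy

theorem oneDiv_ne_zero {I : FractionalIdeal R⁰ (FractionRing R)} (h0 : I ≠ 0) (h1 : I ≤ 1) :
    (1 / I : FractionalIdeal R⁰ (FractionRing R)) ≠ 0 := by
  intro h
  have h2 := one_mem_oneDiv h0 h1
  rw [h, mem_zero_iff] at h2
  exact one_ne_zero h2

theorem le_dd {I : FractionalIdeal R⁰ (FractionRing R)} (h0 : I ≠ 0) (h1 : I ≤ 1) :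
    I ≤ 1 / (1 / I) := by
  intro x hx
  refine (mem_div_iff_of_ne_zero (oneDiv_ne_zero h0 h1)).mpr (fun y hy => ?_)
  have hy' := (mem_div_iff_of_ne_zero h0).mp hy
  rw [mul_comm]
  exact hy' x hx

theorem dd_mono {I J : FractionalIdeal R⁰ (FractionRing R)} (hI0 : I ≠ 0) (hI1 : I ≤ 1)
    (hJ1 : J ≤ 1) (h : J ≤ 1 / (1 / I)) : 1 / (1 / J) ≤ 1 / (1 / I) := by
  by_cases hJ0 : J = 0
  · rw [hJ0, FractionalIdeal.div_zero, FractionalIdeal.div_zero]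
    exact zero_le _
  · intro x hx
    have h1I : (1 / I : FractionalIdeal R⁰ (FractionRing R)) ≠ 0 := oneDiv_ne_zero hI0 hI1
    have h1J : (1 / J : FractionalIdeal R⁰ (FractionRing R)) ≠ 0 := oneDiv_ne_zero hJ0 hJ1
    have hx' := (mem_div_iff_of_ne_zero h1J).mp hx
    refine (mem_div_iff_of_ne_zero h1I).mpr (fun y hy => ?_)
    apply hx'
    refine (mem_div_iff_of_ne_zero hJ0).mpr (fun j hj => ?_)
    have hj2 := (mem_div_iff_of_ne_zero h1I).mp (h hj)
    rw [mul_comm]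
    exact hj2 y hy

/-- membership in the divisorial closure of an ideal -/
def cl (J : Ideal R) (x : R) : Prop :=
  algebraMap R (FractionRing R) x ∈
    (1 / (1 / (J : FractionalIdeal R⁰ (FractionRing R))))

theorem cl_of_mem {J : Ideal R} {x : R} (hx : x ∈ J) : cl J x := by
  have hmem : algebraMap R (FractionRing R) x ∈ (J : FractionalIdeal R⁰ (FractionRing R)) :=
    (mem_coeIdeal _).mpr ⟨x, hx, rfl⟩
  by_cases h0 : (J : FractionalIdeal R⁰ (FractionRing R)) = 0
  · rw [h0, mem_zero_iff] at hmem
    show algebraMap R (FractionRing R) x ∈ _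
    rw [hmem]
    exact zero_mem _
  · exact le_dd h0 (coeIdeal_le_one) hmem

theorem cl_bot {x : R} (hx : cl (⊥ : Ideal R) x) : x = 0 := by
  unfold cl at hx
  rw [coeIdeal_bot, FractionalIdeal.div_zero, FractionalIdeal.div_zero, mem_zero_iff] at hx
  exact IsFractionRing.injective R (FractionRing R) (by rw [hx, _root_.map_zero])

theorem cl_trans {J J' : Ideal R} (h : ∀ y ∈ J', cl J y) {x : R} (hx : cl J' x) : cl J x := by
  by_cases h0 : (J : FractionalIdeal R⁰ (FractionRing R)) = 0
  · have hJ' : (J' : FractionalIdeal R⁰ (FractionRing R)) = 0 := by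
      rw [eq_zero_iff]
      intro y hy
      obtain ⟨y', hy', rfl⟩ := (mem_coeIdeal _).mp hy
      have h2 := h y' hy'
      unfold cl at h2
      rw [h0, FractionalIdeal.div_zero, FractionalIdeal.div_zero, mem_zero_iff] at h2
      exact h2
    unfold cl at hx ⊢
    rw [hJ', FractionalIdeal.div_zero, FractionalIdeal.div_zero, mem_zero_iff] at hx
    rw [hx]
    exact zero_mem _
  · have hle : (J' : FractionalIdeal R⁰ (FractionRing R)) ≤
        1 / (1 / (J : FractionalIdeal R⁰ (FractionRing R))) := by
      intro y hy
      obtain ⟨y', hy', rfl⟩ := (mem_coeIdeal _).mp hy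
      exact h y' hy'
    exact dd_mono h0 (coeIdeal_le_one) (coeIdeal_le_one) hle hx

theorem cl_mono {J J' : Ideal R} (h : J ≤ J') {x : R} (hx : cl J x) : cl J' x :=
  cl_trans (fun y hy => cl_of_mem (h hy)) hx

/-- The divisorial closure as an ideal. -/
def clIdeal (J : Ideal R) : Ideal R where
  carrier := {x | cl J x}
  zero_mem' := by
    show cl J 0
    unfold cl
    rw [_root_.map_zero]
    exact zero_mem _
  add_mem' := by
    intro x y hx hy
    show cl J (x + y)
    unfold cl
    rw [_root_.map_add]
    exact mem_coe.mp (Submodule.add_mem _ (mem_coe.mpr hx) (mem_coe.mpr hy))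
  smul_mem' := by
    intro r x hx
    show cl J (r • x)
    unfold cl
    rw [smul_eq_mul, _root_.map_mul, ← Algebra.smul_def]
    exact mem_coe.mp (Submodule.smul_mem _ r (mem_coe.mpr hx))

theorem mem_clIdeal {J : Ideal R} {x : R} : x ∈ clIdeal J ↔ cl J x := Iff.rfl

theorem clIdeal_mono {J J' : Ideal R} (h : J ≤ J') : clIdeal J ≤ clIdeal J' :=
  fun _ hx => cl_mono h hx

theorem isTIdeal_bot' : ∀ x : R, (∃ J : Ideal R, J.FG ∧ J ≤ (⊥ : Ideal R) ∧
    algebraMap R (FractionRing R) x ∈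
      (1 / (1 / (J : FractionalIdeal R⁰ (FractionRing R))))) → x ∈ (⊥ : Ideal R) := by
  rintro x ⟨J, -, hJ, hx⟩
  rw [le_bot_iff.mp hJ] at hx
  rw [Ideal.mem_bot]
  exact cl_bot hx

end Aux
section Aux2

variable {K : Type*} [Field K]

theorem mem_locg_of_mem {S : Subring K} (p : PrimeSpectrum ↥S) (a : ↥S) :
    (a : K) ∈ locg (K := K) p :=
  ⟨a, 1, fun h => p.2.ne_top ((Ideal.eq_top_iff_one _).2 h), by
    show (a : K) * ((1 : ↥S) : K) = ((a : ↥S) : K)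
    rw [OneMemClass.coe_one, mul_one]⟩

theorem locg_le_locg {S : Subring K} {p q : PrimeSpectrum ↥S} (h : p.asIdeal ≤ q.asIdeal) :
    locg (K := K) q ≤ locg (K := K) p := by
  rintro x ⟨a, b, hb, e⟩
  exact ⟨a, b, fun hbp => hb (h hbp), e⟩

theorem inv_mem_locg {S : Subring K} {p : PrimeSpectrum ↥S} {x : ↥S}
    (hx : x ∉ p.asIdeal) : ((x : K))⁻¹ ∈ locg (K := K) p := by
  refine ⟨1, x, hx, ?_⟩
  have hx0 : (x : K) ≠ 0 := by
    intro h
    exact hx (by rw [show x = 0 from Subtype.ext h]; exact zero_mem _)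
  show ((x : K))⁻¹ * ((x : ↥S) : K) = ((1 : ↥S) : K)
  rw [inv_mul_cancel₀ hx0, OneMemClass.coe_one]

theorem inv_not_mem_locg {S : Subring K} {p : PrimeSpectrum ↥S} {x : ↥S}
    (hx : x ∈ p.asIdeal) (hx0 : (x : K) ≠ 0) : ((x : K))⁻¹ ∉ locg (K := K) p := by
  rintro ⟨a, b, hb, e⟩
  apply hb
  have e' : ((x : K))⁻¹ * (b : K) = (a : K) := e
  have hbax : b = a * x := by
    refine Subtype.ext ?_
    push_cast
    field_simp at e'
    linear_combination e'
  rw [hbax]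
  exact p.asIdeal.mul_mem_left a hx

theorem valuationRing_of_univ (A : Subring K) (h : ∀ x : K, x ∈ A) :
    ValuationRing ↥A := by
  refine { cond' := fun a b => ?_ }
  by_cases ha : (a : K) = 0
  · refine ⟨0, Or.inr (Subtype.ext ?_)⟩
    push_cast
    rw [mul_zero, ha]
  · refine ⟨⟨(b : K) / (a : K), h _⟩, Or.inl (Subtype.ext ?_)⟩
    push_cast
    rw [mul_comm, div_mul_cancel₀ _ ha]

theorem valuationRing_of_overring (A B : Subring K) (hAB : A ≤ B)
    (hV : ValuationRing ↥A)
    (h : ∀ x : ↥B, ∃ a b : ↥A, (b : K) ≠ 0 ∧ (x : K) * b = a) : ValuationRing ↥B := by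
  refine { cond' := fun x y => ?_ }
  obtain ⟨a₁, b₁, hb₁, e₁⟩ := h x
  obtain ⟨a₂, b₂, hb₂, e₂⟩ := h y
  obtain ⟨c, hc⟩ := PreValuationRing.cond (a₁ * b₂) (a₂ * b₁)
  have hbb : ((b₁ : K)) * (b₂ : K) ≠ 0 := mul_ne_zero hb₁ hb₂
  rcases hc with h1 | h1
  · refine ⟨⟨(c : K), hAB c.2⟩, Or.inl (Subtype.ext ?_)⟩
    have h1K : ((a₁ : K)) * b₂ * c = (a₂ : K) * b₁ := by exact_mod_cast congrArg Subtype.val h1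
    push_cast
    apply mul_right_cancel₀ hbb
    linear_combination ((c : K) * (b₂ : K)) * e₁ - (b₁ : K) * e₂ + h1K
  · refine ⟨⟨(c : K), hAB c.2⟩, Or.inr (Subtype.ext ?_)⟩
    have h1K : ((a₂ : K)) * b₁ * c = (a₁ : K) * b₂ := by exact_mod_cast congrArg Subtype.val h1
    push_cast
    apply mul_right_cancel₀ hbb
    linear_combination ((c : K) * (b₁ : K)) * e₂ - (b₂ : K) * e₁ + h1K

theorem valuationRing_locg_of_hom {R K₁ K₂ : Type*} [CommRing R] [IsDomain R] [Field K₁]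
    [Field K₂] [Algebra R K₁] [Algebra R K₂] (f : K₁ →+* K₂)
    (hf : ∀ r, f (algebraMap R K₁ r) = algebraMap R K₂ r) (p : PrimeSpectrum R)
    (hV : ValuationRing ↥(locg (K := K₂) p)) : ValuationRing ↥(locg (K := K₁) p) := by
  have himg : ∀ z : ↥(locg (K := K₁) p), (f z : K₂) ∈ locg (K := K₂) p := by
    rintro ⟨z, a, b, hb, e⟩
    exact ⟨a, b, hb, by rw [← hf, ← hf, ← map_mul]; exact congrArg f e⟩
  have hmemK₁ : ∀ z : K₁, f z ∈ locg (K := K₂) p → z ∈ locg (K := K₁) p := by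
    intro z hz
    obtain ⟨a, b, hb, e⟩ := hz
    refine ⟨a, b, hb, f.injective ?_⟩
    rw [map_mul, hf, hf]
    exact e
  refine { cond' := fun x y => ?_ }
  by_cases hx : (x : K₁) = 0
  · refine ⟨0, Or.inr (Subtype.ext ?_)⟩
    push_cast
    rw [mul_zero, hx]
  by_cases hy : (y : K₁) = 0
  · refine ⟨0, Or.inl (Subtype.ext ?_)⟩
    push_cast
    rw [mul_zero, hy]
  obtain ⟨c, hc⟩ := PreValuationRing.cond (⟨f x, himg x⟩ : ↥(locg (K := K₂) p)) ⟨f y, himg y⟩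
  have hfx : f (x : K₁) ≠ 0 := by
    intro h
    apply hx
    apply f.injective
    rw [h, map_zero]
  have hfy : f (y : K₁) ≠ 0 := by
    intro h
    apply hy
    apply f.injective
    rw [h, map_zero]
  rcases hc with h1 | h1
  · have h1K : f (x : K₁) * (c : K₂) = f (y : K₁) := congrArg Subtype.val h1
    have hcval : (c : K₂) = f ((y : K₁) / (x : K₁)) := by
      rw [map_div₀]
      field_simp
      linear_combination h1K
    have hmem : ((y : K₁) / (x : K₁)) ∈ locg (K := K₁) p := hmemK₁ _ (by rw [← hcval]; exact c.2)
    refine ⟨⟨_, hmem⟩, Or.inl (Subtype.ext ?_)⟩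
    push_cast
    rw [mul_comm, div_mul_cancel₀ _ hx]
  · have h1K : f (y : K₁) * (c : K₂) = f (x : K₁) := congrArg Subtype.val h1
    have hcval : (c : K₂) = f ((x : K₁) / (y : K₁)) := by
      rw [map_div₀]
      field_simp
      linear_combination h1K
    have hmem : ((x : K₁) / (y : K₁)) ∈ locg (K := K₁) p := hmemK₁ _ (by rw [← hcval]; exact c.2)
    refine ⟨⟨_, hmem⟩, Or.inr (Subtype.ext ?_)⟩
    push_cast
    rw [mul_comm, div_mul_cancel₀ _ hy]

end Aux2
set_option maxHeartbeats 2000000 in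
open FractionalIdeal in
theorem isPvMD_of_finite_essential_intersection {K : Type*} [Field K] (n : ℕ)
    (D : Fin n → Subring K) (hD : ∀ i, IsPvMD ↥(D i))
    (hloc : ∀ i, ∀ q : PrimeSpectrum ↥(D i), IsTIdeal ↥(D i) q.asIdeal →
      ValuationRing ↥(locg (K := K) q) ∧
        ∃ p : PrimeSpectrum ↥(⨅ i, D i), locg (K := K) q = locg (K := K) p)
    (hint : (⨅ i, ⨅ q : PrimeSpectrum ↥(D i), ⨅ _ : IsTIdeal ↥(D i) q.asIdeal,
      locg (K := K) q) = ⨅ i, D i) :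
    IsPvMD ↥(⨅ i, D i) := by
  intro M hMtm hM
  obtain ⟨hMt, hMne, -⟩ := hMtm
  by_cases hne : Nonempty (Fin n)
  swap
  · -- degenerate case: no rings, the intersection is everything, a field
    have hE : IsEmpty (Fin n) := not_nonempty_iff.mp hne
    apply valuationRing_of_univ
    intro x
    obtain ⟨a, b, hb, rfl⟩ := IsFractionRing.div_surjective (A := ↥(⨅ i, D i)) x
    have hb0 : b ≠ 0 := nonZeroDivisors.ne_zero hb
    have hbK : (b : K) ≠ 0 := fun h => hb0 (Subtype.ext h)
    have hbinv : ((b : K))⁻¹ ∈ ⨅ i, D i := by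
      rw [Subring.mem_iInf]
      exact fun i => (hE.elim i)
    have hbM : b ∉ M := by
      intro hbM
      apply hMne
      rw [Ideal.eq_top_iff_one]
      have hbu : b * ⟨((b : K))⁻¹, hbinv⟩ = 1 := Subtype.ext (by
        push_cast
        exact mul_inv_cancel₀ hbK)
      rw [← hbu]
      exact M.mul_mem_right _ hbM
    refine ⟨a, b, hbM, ?_⟩
    rw [div_mul_cancel₀]
    exact IsFractionRing.to_map_ne_zero_of_mem_nonZeroDivisors hb
  -- main case
  -- Step A: every f.g. subideal of M is "trapped" by some essential t-prime
  have stepA : ∀ J : Ideal ↥(⨅ i, D i), J.FG → J ≤ M →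
      ∃ (i : Fin n) (q : PrimeSpectrum ↥(D i)), IsTIdeal ↥(D i) q.asIdeal ∧
        ∀ x ∈ J, Subring.inclusion (iInf_le D i) x ∈ q.asIdeal := by
    intro J hJfg hJM
    by_contra hcon
    push_neg at hcon
    by_cases hJ0 : J = ⊥
    · obtain ⟨i⟩ := hne
      obtain ⟨x, hxJ, hxq⟩ := hcon i ⟨⊥, Ideal.bot_prime⟩ (isTIdeal_bot')
      rw [hJ0, Ideal.mem_bot] at hxJ
      exact hxq (by rw [hxJ, _root_.map_zero]; exact zero_mem _)
    · apply hMne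
      rw [Ideal.eq_top_iff_one]
      apply hMt
      refine ⟨J, hJfg, hJM, ?_⟩
      rw [_root_.map_one]
      have hJne : (J : FractionalIdeal (↥(⨅ i, D i))⁰ (FractionRing ↥(⨅ i, D i))) ≠ 0 :=
        (coeIdeal_ne_zero' le_rfl).mpr hJ0
      have hsub : (1 / (J : FractionalIdeal (↥(⨅ i, D i))⁰ (FractionRing ↥(⨅ i, D i)))
          : FractionalIdeal (↥(⨅ i, D i))⁰ (FractionRing ↥(⨅ i, D i))) ≤ 1 := by
        intro x hx
        have hx' := (mem_div_iff_of_ne_zero hJne).mp hx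
        obtain ⟨a, b, hb, rfl⟩ := IsFractionRing.div_surjective (A := ↥(⨅ i, D i)) x
        have hb0 : b ≠ 0 := nonZeroDivisors.ne_zero hb
        have hbK : (b : K) ≠ 0 := fun h => hb0 (Subtype.ext h)
        have halgb : algebraMap (↥(⨅ i, D i)) (FractionRing ↥(⨅ i, D i)) b ≠ 0 :=
          IsFractionRing.to_map_ne_zero_of_mem_nonZeroDivisors hb
        have key : ∀ j ∈ J, ∃ d : ↥(⨅ i, D i), a * j = b * d := by
          intro j hj
          obtain ⟨d, hd⟩ := (mem_one_iff _).mp (hx' _ ((mem_coeIdeal _).mpr ⟨j, hj, rfl⟩))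
          refine ⟨d, IsFractionRing.injective (↥(⨅ i, D i)) (FractionRing ↥(⨅ i, D i)) ?_⟩
          rw [_root_.map_mul, _root_.map_mul, hd]
          field_simp
        have hκ0 : ((a : K) / (b : K)) ∈ ⨅ i, ⨅ q : PrimeSpectrum ↥(D i),
            ⨅ _ : IsTIdeal ↥(D i) q.asIdeal, locg (K := K) q := by
          rw [Subring.mem_iInf]
          intro i
          rw [Subring.mem_iInf]
          intro q
          rw [Subring.mem_iInf]
          intro htq
          obtain ⟨j, hjJ, hjq⟩ := hcon i q htq
          obtain ⟨d, hd⟩ := key j hjJ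
          refine ⟨Subring.inclusion (iInf_le D i) d, Subring.inclusion (iInf_le D i) j, hjq, ?_⟩
          have hdK : (a : K) * (j : K) = (b : K) * (d : K) := by
            exact_mod_cast congrArg Subtype.val hd
          show (a : K) / (b : K) * ((j : ↥(⨅ i, D i)) : K) = ((d : ↥(⨅ i, D i)) : K)
          field_simp
          linear_combination hdK
        have hκ : ((a : K) / (b : K)) ∈ ⨅ i, D i := by
          rw [hint] at hκ0
          exact hκ0
        refine (mem_one_iff _).mpr ⟨⟨_, hκ⟩, ?_⟩
        rw [eq_div_iff halgb, ← _root_.map_mul]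
        congr 1
        refine Subtype.ext ?_
        push_cast
        exact div_mul_cancel₀ _ hbK
      refine (mem_div_iff_of_ne_zero (oneDiv_ne_zero hJne coeIdeal_le_one)).mpr ?_
      intro y hy
      rw [one_mul]
      exact hsub hy
  -- Step B: a single index i works for all f.g. subideals of M
  have stepB : ∃ i : Fin n, ∀ J : Ideal ↥(⨅ i, D i), J.FG → J ≤ M →
      ∃ q : PrimeSpectrum ↥(D i), IsTIdeal ↥(D i) q.asIdeal ∧
        ∀ x ∈ J, Subring.inclusion (iInf_le D i) x ∈ q.asIdeal := by
    by_contra hcon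
    push_neg at hcon
    choose Jf hfg hle hbad using hcon
    obtain ⟨i, q, htq, hq⟩ := stepA (⨆ i, Jf i) (Submodule.fg_iSup _ hfg) (iSup_le hle)
    obtain ⟨x, hxJ, hxq⟩ := hbad i q htq
    exact hxq (hq x (le_iSup Jf i hxJ))
  obtain ⟨i, hstep⟩ := stepB
  -- the t-closure of M · D i
  let T : Ideal ↥(D i) :=
    { carrier := {y | ∃ J₀ : Ideal ↥(⨅ i, D i), J₀.FG ∧ J₀ ≤ M ∧
        y ∈ clIdeal (Ideal.map (Subring.inclusion (iInf_le D i)) J₀)}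
      zero_mem' := ⟨⊥, Submodule.fg_bot, bot_le, (clIdeal _).zero_mem⟩
      add_mem' := by
        rintro x y ⟨J₁, h₁f, h₁M, h₁⟩ ⟨J₂, h₂f, h₂M, h₂⟩
        exact ⟨J₁ ⊔ J₂, Submodule.FG.sup h₁f h₂f, sup_le h₁M h₂M,
          (clIdeal _).add_mem
            (clIdeal_mono (Ideal.map_mono le_sup_left) h₁)
            (clIdeal_mono (Ideal.map_mono le_sup_right) h₂)⟩
      smul_mem' := by
        rintro r x ⟨J₁, h₁f, h₁M, h₁⟩
        exact ⟨J₁, h₁f, h₁M, (clIdeal _).smul_mem r h₁⟩ }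
  have hTmem : ∀ x ∈ M, Subring.inclusion (iInf_le D i) x ∈ T := by
    intro x hx
    refine ⟨Ideal.span {x}, Submodule.fg_span (Set.finite_singleton x),
      Ideal.span_le.mpr (Set.singleton_subset_iff.mpr hx), cl_of_mem ?_⟩
    exact Ideal.mem_map_of_mem _ (Ideal.subset_span (Set.mem_singleton x))
  have hTt : IsTIdeal ↥(D i) T := by
    rintro x ⟨J, hJfg, hJT, hx⟩
    obtain ⟨s, rfl⟩ := hJfg
    have hgen : ∀ g : {g // g ∈ s}, ∃ J₀ : Ideal ↥(⨅ i, D i), J₀.FG ∧ J₀ ≤ M ∧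
        (g : ↥(D i)) ∈ clIdeal (Ideal.map (Subring.inclusion (iInf_le D i)) J₀) :=
      fun g => hJT (Ideal.subset_span g.2)
    choose F hFfg hFM hFcl using hgen
    refine ⟨⨆ g, F g, Submodule.fg_iSup F hFfg, iSup_le hFM, ?_⟩
    have hspan : Ideal.span ↑s ≤
        clIdeal (Ideal.map (Subring.inclusion (iInf_le D i)) (⨆ g, F g)) := by
      rw [Ideal.span_le]
      intro g hg
      exact clIdeal_mono (Ideal.map_mono (le_iSup F ⟨g, hg⟩)) (hFcl ⟨g, hg⟩)
    exact cl_trans (fun y hy => hspan hy) hx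
  have hTne : T ≠ ⊤ := by
    intro hT
    have h1T : (1 : ↥(D i)) ∈ T := hT ▸ Submodule.mem_top
    obtain ⟨J₀, hfg, hle, hcl⟩ := h1T
    obtain ⟨q, htq, hq⟩ := hstep J₀ hfg hle
    have hmap : Ideal.map (Subring.inclusion (iInf_le D i)) J₀ ≤ q.asIdeal :=
      Ideal.map_le_iff_le_comap.mpr (fun x hx => hq x hx)
    have h1q : (1 : ↥(D i)) ∈ q.asIdeal :=
      htq 1 ⟨Ideal.map (Subring.inclusion (iInf_le D i)) J₀, hfg.map _, hmap, hcl⟩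
    exact q.2.ne_top ((Ideal.eq_top_iff_one _).mpr h1q)
  -- Zorn: a maximal t-ideal above T
  have hzorn : ∃ N, T ≤ N ∧
      Maximal (· ∈ {I : Ideal ↥(D i) | IsTIdeal ↥(D i) I ∧ I ≠ ⊤ ∧ T ≤ I}) N := by
    refine zorn_le_nonempty₀ {I : Ideal ↥(D i) | IsTIdeal ↥(D i) I ∧ I ≠ ⊤ ∧ T ≤ I}
        ?_ T ⟨hTt, hTne, le_rfl⟩
    intro c hcs hchain y hyc
    haveI : Nonempty c := ⟨⟨y, hyc⟩⟩
    have hdir : DirectedOn (· ≤ ·) c := hchain.directedOn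
    have hmem : ∀ x : ↥(D i), x ∈ sSup c ↔ ∃ I ∈ c, x ∈ I := by
      intro x
      rw [sSup_eq_iSup', Submodule.mem_iSup_of_directed _ (directedOn_iff_directed.mp hdir)]
      simp
    refine ⟨sSup c, ⟨?_, ?_, ?_⟩, fun z hz => le_sSup hz⟩
    · rintro x ⟨J, hJfg, hJle, hx⟩
      obtain ⟨s, rfl⟩ := hJfg
      have hkey : ∀ t : Finset ↥(D i), (∀ g ∈ t, ∃ I ∈ c, g ∈ I) → ∃ I ∈ c, ∀ g ∈ t, g ∈ I := by
        classical
        intro t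
        induction t using Finset.induction_on with
        | empty => exact fun _ => ⟨y, hyc, by simp⟩
        | @insert a t ha ih =>
          intro h
          obtain ⟨I₁, hI₁, hall⟩ := ih (fun g hg => h g (Finset.mem_insert_of_mem hg))
          obtain ⟨I₂, hI₂, haI₂⟩ := h a (Finset.mem_insert_self a t)
          obtain ⟨I₃, hI₃, h13, h23⟩ := hdir I₁ hI₁ I₂ hI₂
          exact ⟨I₃, hI₃, fun g hg => by
            rcases Finset.mem_insert.mp hg with rfl | hg
            · exact h23 haI₂
            · exact h13 (hall g hg)⟩
      obtain ⟨I, hIc, hall⟩ := hkey s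
        (fun g hg => (hmem g).mp (hJle (Ideal.subset_span hg)))
      have hJI : Ideal.span (↑s : Set ↥(D i)) ≤ I := Ideal.span_le.mpr (fun g hg => hall g hg)
      exact (hmem x).mpr ⟨I, hIc, (hcs hIc).1 x ⟨Ideal.span ↑s, ⟨s, rfl⟩, hJI, hx⟩⟩
    · intro h
      have h1 : (1 : ↥(D i)) ∈ sSup c := h ▸ Submodule.mem_top
      obtain ⟨I, hIc, h1I⟩ := (hmem 1).mp h1
      exact (hcs hIc).2.1 ((Ideal.eq_top_iff_one _).mpr h1I)
    · exact le_trans (hcs hyc).2.2 (le_sSup hyc)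
  obtain ⟨N, hTN, hNmax⟩ := hzorn
  obtain ⟨hNt, hNne, hTleN⟩ := hNmax.1
  -- N is prime
  have hNprime : N.IsPrime := by
    rw [Ideal.isPrime_iff]
    refine ⟨hNne, ?_⟩
    intro a b hab
    by_cases hbN : b ∈ N
    · exact Or.inr hbN
    left
    have hb0 : b ≠ 0 := fun h => hbN (h ▸ N.zero_mem)
    have hCt : IsTIdeal ↥(D i) (N.colon (Ideal.span {b})) := by
      rintro x ⟨J, hJfg, hJC, hx⟩
      rw [Ideal.mem_colon_span_singleton]
      by_cases hJ0 : J = ⊥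
      · rw [hJ0] at hx
        have hx0 : x = 0 := cl_bot hx
        rw [hx0, zero_mul]
        exact N.zero_mem
      · apply hNt
        have hJne : (J : FractionalIdeal (↥(D i))⁰ (FractionRing ↥(D i))) ≠ 0 :=
          (coeIdeal_ne_zero' le_rfl).mpr hJ0
        have hJbbot : J * Ideal.span {b} ≠ ⊥ := by
          rw [Ne, Ideal.mul_eq_bot]
          push_neg
          exact ⟨hJ0, by rw [Ne, Ideal.span_singleton_eq_bot]; exact hb0⟩
        have hJbne : ((J * Ideal.span {b} : Ideal ↥(D i)) :
            FractionalIdeal (↥(D i))⁰ (FractionRing ↥(D i))) ≠ 0 :=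
          (coeIdeal_ne_zero' le_rfl).mpr hJbbot
        refine ⟨J * Ideal.span {b}, Submodule.FG.mul hJfg (Submodule.fg_span (Set.finite_singleton b)), ?_, ?_⟩
        · rw [Ideal.mul_le]
          intro r hr s hs
          obtain ⟨t, rfl⟩ := Ideal.mem_span_singleton'.mp hs
          have hrb : r * b ∈ N := Ideal.mem_colon_span_singleton.mp (hJC hr)
          rw [show r * (t * b) = t * (r * b) by rw [← mul_assoc, mul_comm r t, mul_assoc]]
          exact N.mul_mem_left t hrb
        · refine (mem_div_iff_of_ne_zero (oneDiv_ne_zero hJbne coeIdeal_le_one)).mpr ?_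
          intro y hy
          have hy' := (mem_div_iff_of_ne_zero hJbne).mp hy
          have hyb : y * algebraMap (↥(D i)) (FractionRing ↥(D i)) b ∈
              (1 / (J : FractionalIdeal (↥(D i))⁰ (FractionRing ↥(D i))) :
                FractionalIdeal (↥(D i))⁰ (FractionRing ↥(D i))) := by
            refine (mem_div_iff_of_ne_zero hJne).mpr ?_
            intro z hz
            obtain ⟨j, hj, rfl⟩ := (mem_coeIdeal _).mp hz
            have hjb : algebraMap (↥(D i)) (FractionRing ↥(D i)) (j * b) ∈
                ((J * Ideal.span {b} : Ideal ↥(D i)) :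
                  FractionalIdeal (↥(D i))⁰ (FractionRing ↥(D i))) :=
              (mem_coeIdeal _).mpr ⟨j * b,
                Ideal.mul_mem_mul hj (Ideal.mem_span_singleton_self b), rfl⟩
            have h2 := hy' _ hjb
            rw [_root_.map_mul] at h2
            rw [mul_right_comm, mul_assoc]
            exact h2
          have hx2 := (mem_div_iff_of_ne_zero (oneDiv_ne_zero hJne coeIdeal_le_one)).mp hx
          have h3 := hx2 _ hyb
          rw [_root_.map_mul]
          rw [mul_assoc, mul_comm (algebraMap (↥(D i)) (FractionRing ↥(D i)) b) y]
          exact h3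
    have hCne : N.colon (Ideal.span {b}) ≠ ⊤ := by
      intro h
      have h1 : (1 : ↥(D i)) ∈ N.colon (Ideal.span {b}) := h ▸ Submodule.mem_top
      rw [Ideal.mem_colon_span_singleton, one_mul] at h1
      exact hbN h1
    have hNC : N ≤ N.colon (Ideal.span {b}) := by
      intro x hx
      rw [Ideal.mem_colon_span_singleton]
      exact N.mul_mem_right b hx
    have hCN : N.colon (Ideal.span {b}) ≤ N :=
      hNmax.2 ⟨hCt, hCne, le_trans hTleN hNC⟩ hNC
    exact hCN (Ideal.mem_colon_span_singleton.mpr hab)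
  -- the valuation ring from the essential representation
  obtain ⟨hVq, p, hpq⟩ := hloc i ⟨N, hNprime⟩ hNt
  have hMp : M ≤ p.asIdeal := by
    intro x hxM
    by_contra hxp
    have hx0 : (x : K) ≠ 0 := by
      intro h
      exact hxp (by rw [show x = 0 from Subtype.ext h]; exact zero_mem _)
    have h1 : ((x : K))⁻¹ ∈ locg (K := K) p := inv_mem_locg hxp
    rw [← hpq] at h1
    have hxN : Subring.inclusion (iInf_le D i) x ∈
        (⟨N, hNprime⟩ : PrimeSpectrum ↥(D i)).asIdeal := hTleN (hTmem x hxM)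
    exact inv_not_mem_locg hxN hx0 h1
  have hVM : ValuationRing ↥(locg (K := K) (⟨M, hM⟩ : PrimeSpectrum ↥(⨅ i, D i))) := by
    refine valuationRing_of_overring (locg (K := K) (⟨N, hNprime⟩ : PrimeSpectrum ↥(D i))) _
      ?_ hVq ?_
    · rw [hpq]
      exact locg_le_locg hMp
    · rintro ⟨x, a, b, hb, e⟩
      have hb0 : (b : K) ≠ 0 := by
        intro h
        exact hb (by rw [show b = 0 from Subtype.ext h]; exact zero_mem _)
      refine ⟨⟨(a : K), ?_⟩, ⟨(b : K), ?_⟩, hb0, e⟩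
      · rw [hpq]
        exact mem_locg_of_mem p a
      · rw [hpq]
        exact mem_locg_of_mem p b
  exact valuationRing_locg_of_hom
    (IsFractionRing.lift (g := algebraMap (↥(⨅ i, D i)) K) (fun u v huv => Subtype.ext huv))
    (fun r => IsFractionRing.lift_algebraMap _ _) ⟨M, hM⟩ hVM
end

section
/- Let π : V → k be the canonical projection from a valuation domain V onto its residue field k, and let D be a Prüfer v-multiplication domain with quotient field k. Then the pullback R := π⁻¹(D) is a Prüfer v-multiplication domain. -/
open scoped nonZeroDivisors

section TLemmas

variable {S : Type*} [CommRing S] [IsDomain S]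

local notation "K" => FractionRing S
local notation "φ" => algebraMap S (FractionRing S)

theorem mem_vclosure_iff {J : Ideal S} (hJ : J ≠ ⊥) (x : FractionRing S) :
    x ∈ (1 / (1 / (J : FractionalIdeal S⁰ K))) ↔
      ∀ z : FractionRing S,
        (∀ y ∈ J, ∃ r : S, φ r = z * φ y) → ∃ r : S, φ r = x * z := by
  have hJ0 : (J : FractionalIdeal S⁰ K) ≠ 0 := FractionalIdeal.coeIdeal_ne_zero.2 hJ
  have hmemJ : ∀ z : FractionRing S,
      z ∈ (1 / (J : FractionalIdeal S⁰ K)) ↔ ∀ y ∈ J, ∃ r : S, φ r = z * φ y := by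
    intro z
    rw [FractionalIdeal.mem_div_iff_of_ne_zero hJ0]
    constructor
    · intro h y hy
      have := h (φ y) (FractionalIdeal.mem_coeIdeal_of_mem _ hy)
      rwa [FractionalIdeal.mem_one_iff] at this
    · intro h w hw
      rw [FractionalIdeal.mem_coeIdeal] at hw
      obtain ⟨y, hy, rfl⟩ := hw
      rw [FractionalIdeal.mem_one_iff]
      exact h y hy
  have h1J : (1 / (J : FractionalIdeal S⁰ K)) ≠ 0 := by
    intro h0
    have h1 : (1 : FractionRing S) ∈ (1 / (J : FractionalIdeal S⁰ K)) := by
      rw [hmemJ]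
      intro y hy
      exact ⟨y, by rw [one_mul]⟩
    rw [h0] at h1
    simp at h1
  rw [FractionalIdeal.mem_div_iff_of_ne_zero h1J]
  constructor
  · intro h z hz
    have := h z ((hmemJ z).2 hz)
    rwa [FractionalIdeal.mem_one_iff] at this
  · intro h z hz
    rw [FractionalIdeal.mem_one_iff]
    exact h z ((hmemJ z).1 hz)


theorem eq_zero_of_mem_vclosure_bot {x : FractionRing S}
    (hx : x ∈ (1 / (1 / ((⊥ : Ideal S) : FractionalIdeal S⁰ K)))) : x = 0 := by
  rw [FractionalIdeal.coeIdeal_bot, FractionalIdeal.div_zero, FractionalIdeal.div_zero] at hx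
  simpa using hx


theorem isTIdeal_colon {I : Ideal S} (hI : IsTIdeal S I) (b : S) :
    IsTIdeal S (I.colon (Ideal.span {b})) := by
  rcases eq_or_ne b 0 with rfl | hb
  · intro x _
    rw [Submodule.mem_colon_span_singleton, smul_eq_mul, mul_zero]
    exact I.zero_mem
  intro x ⟨J, hJfg, hJle, hmem⟩
  rcases eq_or_ne J ⊥ with rfl | hJ
  · have : (φ) x = 0 := eq_zero_of_mem_vclosure_bot hmem
    have : x = 0 := by
      exact (map_eq_zero_iff _ (IsFractionRing.injective S K)).1 this
    subst this
    exact Ideal.zero_mem _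
  rw [Submodule.mem_colon_span_singleton, smul_eq_mul]
  apply hI
  refine ⟨Ideal.span {b} * J, (Submodule.fg_span_singleton b).mul hJfg, ?_, ?_⟩
  · rw [Ideal.mul_le]
    intro r hr s hs
    rw [Ideal.mem_span_singleton] at hr
    obtain ⟨t, rfl⟩ := hr
    have := hJle hs
    rw [Submodule.mem_colon_span_singleton, smul_eq_mul] at this
    have : t * (s * b) ∈ I := I.mul_mem_left t this
    have heq : b * t * s = t * (s * b) := by ring
    rwa [heq]
  · have hbJ : Ideal.span {b} * J ≠ ⊥ := by
      have h1 : Ideal.span {b} ≠ ⊥ := by simpa [Ideal.span_eq_bot] using hb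
      intro h0
      rcases Ideal.mul_eq_bot.1 h0 with h | h
      · exact h1 h
      · exact hJ h
    rw [mem_vclosure_iff hbJ]
    intro z hz
    rw [mem_vclosure_iff hJ] at hmem
    have hzb : ∀ y ∈ J, ∃ r : S, φ r = (z * φ b) * φ y := by
      intro y hy
      obtain ⟨r, hr⟩ := hz (b * y) (Ideal.mul_mem_mul (Ideal.mem_span_singleton_self b) hy)
      exact ⟨r, by rw [hr, map_mul]; ring⟩
    obtain ⟨r, hr⟩ := hmem (z * φ b) hzb
    exact ⟨r, by rw [hr, map_mul]; ring⟩

theorem IsTMax.isPrime_s18 {M : Ideal S} (hM : IsTMax S M) : M.IsPrime := by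
  obtain ⟨ht, hne, hmax⟩ := hM
  refine ⟨hne, ?_⟩
  intro a b hab
  by_cases ha : a ∈ M
  · exact Or.inl ha
  right
  set I := M.colon (Ideal.span {a}) with hIdef
  have hIt : IsTIdeal S I := isTIdeal_colon ht a
  have hMI : M ≤ I := fun m hm => by
    rw [Submodule.mem_colon_span_singleton, smul_eq_mul]; exact M.mul_mem_right a hm
  have hbI : b ∈ I := by rw [Submodule.mem_colon_span_singleton, smul_eq_mul, mul_comm]; exact hab
  by_cases hItop : I = ⊤
  · exfalso
    have : (1 : S) ∈ I := hItop ▸ Submodule.mem_top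
    rw [Submodule.mem_colon_span_singleton, smul_eq_mul, one_mul] at this
    exact ha this
  · rw [← hmax I hIt hItop hMI]; exact hbI

theorem exists_isTMax {p : Ideal S} (hp : IsTIdeal S p) (hne : p ≠ ⊤) :
    ∃ m : Ideal S, p ≤ m ∧ IsTMax S m := by
  have ih : ∀ c ⊆ {I : Ideal S | IsTIdeal S I ∧ I ≠ ⊤}, IsChain (· ≤ ·) c →
      ∀ y ∈ c, ∃ ub ∈ {I : Ideal S | IsTIdeal S I ∧ I ≠ ⊤}, ∀ z ∈ c, z ≤ ub := by
    intro c hcs hchain y hy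
    refine ⟨sSup c, ⟨?_, ?_⟩, fun z hz => le_sSup hz⟩
    · intro x ⟨J, hJfg, hJle, hmem⟩
      have hcompact : IsCompactElement J := (Submodule.fg_iff_compact J).1 hJfg
      obtain ⟨I, hIc, hJI⟩ := (CompleteLattice.isCompactElement_iff_le_of_directed_sSup_le (α := Ideal S) J).1
        hcompact c ⟨y, hy⟩ hchain.directedOn hJle
      exact le_sSup hIc ((hcs hIc).1 x ⟨J, hJfg, hJI, hmem⟩)
    · intro htop
      have h1 : (1 : S) ∈ sSup c := htop ▸ Submodule.mem_top
      obtain ⟨I, hIc, h1I⟩ := (Submodule.mem_sSup_of_directed ⟨y, hy⟩ hchain.directedOn).1 h1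
      exact (hcs hIc).2 ((Ideal.eq_top_iff_one I).2 h1I)
  obtain ⟨m, hpm, hmax⟩ := zorn_le_nonempty₀
    {I : Ideal S | IsTIdeal S I ∧ I ≠ ⊤} ih p ⟨hp, hne⟩
  refine ⟨m, hpm, hmax.1.1, hmax.1.2, fun I hIt hItop hmI => ?_⟩
  exact le_antisymm (hmax.2 ⟨hIt, hItop⟩ hmI) hmI

end TLemmas

section Crit

variable {R : Type*} [CommRing R] [IsDomain R]

local notation "φ" => algebraMap R (FractionRing R)

theorem valuationRing_locg_of (p : PrimeSpectrum R)
    (h : ∀ a b : R, a ≠ 0 → b ≠ 0 →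
      (∃ c d : R, d ∉ p.asIdeal ∧ a * d = b * c) ∨
      (∃ c d : R, d ∉ p.asIdeal ∧ b * d = a * c)) :
    ValuationRing (locg (K := FractionRing R) p) := by
  have hinj : Function.Injective (φ) := IsFractionRing.injective R (FractionRing R)
  have hne : ∀ b : R, b ∉ p.asIdeal → (φ) b ≠ 0 := by
    intro b hb h0
    exact hb (by rw [hinj (h0.trans (map_zero _).symm)]; exact p.asIdeal.zero_mem)
  refine { cond' := ?_ }
  intro x y
  by_cases hx : (x : FractionRing R) = 0
  · refine ⟨0, Or.inr ?_⟩
    ext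
    push_cast
    rw [hx, mul_zero]
  by_cases hy : (y : FractionRing R) = 0
  · refine ⟨0, Or.inl ?_⟩
    ext
    push_cast
    rw [hy, mul_zero]
  obtain ⟨a₁, b₁, hb₁, e₁⟩ := x.2
  obtain ⟨a₂, b₂, hb₂, e₂⟩ := y.2
  have hb₁0 : (φ) b₁ ≠ 0 := hne b₁ hb₁
  have hb₂0 : (φ) b₂ ≠ 0 := hne b₂ hb₂
  have ha₁ : a₁ ≠ 0 := by
    rintro rfl
    rw [map_zero] at e₁
    exact hx ((mul_eq_zero.1 e₁).resolve_right hb₁0)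
  have ha₂ : a₂ ≠ 0 := by
    rintro rfl
    rw [map_zero] at e₂
    exact hy ((mul_eq_zero.1 e₂).resolve_right hb₂0)
  have hb₁' : b₁ ≠ 0 := fun h0 => hb₁0 (by rw [h0, map_zero])
  have hb₂' : b₂ ≠ 0 := fun h0 => hb₂0 (by rw [h0, map_zero])
  -- helper: given a₁b₂*d = a₂b₁*c with d ∉ p, produce z ∈ locg with y * z = x
  have key : ∀ (c d : R), d ∉ p.asIdeal → a₁ * b₂ * d = a₂ * b₁ * c →
      ∃ z : (locg (K := FractionRing R) p), y * z = x := by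
    intro c d hd he
    have hd0 : (φ) d ≠ 0 := hne d hd
    refine ⟨⟨(φ) c / (φ) d, c, d, hd, by field_simp⟩, ?_⟩
    ext
    push_cast
    rw [← mul_div_assoc, div_eq_iff hd0]
    -- ↑y * φ c = ↑x * φ d
    apply mul_left_cancel₀ hb₂0
    apply mul_left_cancel₀ hb₁0
    calc (φ) b₁ * ((φ) b₂ * (↑y * (φ) c)) = ((↑y * (φ) b₂)) * ((φ) b₁ * (φ) c) := by ring
    _ = (φ) a₂ * ((φ) b₁ * (φ) c) := by rw [e₂]
    _ = (φ) (a₂ * b₁ * c) := by push_cast; ring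
    _ = (φ) (a₁ * b₂ * d) := by rw [← he]
    _ = ((φ) a₁) * ((φ) b₂ * (φ) d) := by push_cast; ring
    _ = (↑x * (φ) b₁) * ((φ) b₂ * (φ) d) := by rw [e₁]
    _ = (φ) b₁ * ((φ) b₂ * (↑x * (φ) d)) := by ring
  have key2 : ∀ (c d : R), d ∉ p.asIdeal → a₂ * b₁ * d = a₁ * b₂ * c →
      ∃ z : (locg (K := FractionRing R) p), x * z = y := by
    intro c d hd he
    have hd0 : (φ) d ≠ 0 := hne d hd
    refine ⟨⟨(φ) c / (φ) d, c, d, hd, by field_simp⟩, ?_⟩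
    ext
    push_cast
    rw [← mul_div_assoc, div_eq_iff hd0]
    apply mul_left_cancel₀ hb₁0
    apply mul_left_cancel₀ hb₂0
    calc (φ) b₂ * ((φ) b₁ * (↑x * (φ) c)) = ((↑x * (φ) b₁)) * ((φ) b₂ * (φ) c) := by ring
    _ = (φ) a₁ * ((φ) b₂ * (φ) c) := by rw [e₁]
    _ = (φ) (a₁ * b₂ * c) := by push_cast; ring
    _ = (φ) (a₂ * b₁ * d) := by rw [← he]
    _ = ((φ) a₂) * ((φ) b₁ * (φ) d) := by push_cast; ring
    _ = (↑y * (φ) b₂) * ((φ) b₁ * (φ) d) := by rw [e₂]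
    _ = (φ) b₂ * ((φ) b₁ * (↑y * (φ) d)) := by ring
  rcases h (a₁ * b₂) (a₂ * b₁) (mul_ne_zero ha₁ hb₂') (mul_ne_zero ha₂ hb₁') with
    ⟨c, d, hd, he⟩ | ⟨c, d, hd, he⟩
  · obtain ⟨z, hz⟩ := key c d hd he
    exact ⟨z, Or.inr hz⟩
  · obtain ⟨z, hz⟩ := key2 c d hd he
    exact ⟨z, Or.inl hz⟩

end Crit

section Pullback

variable {V : Type*} [CommRing V] [IsDomain V] [ValuationRing V]
  (D : Subring (IsLocalRing.ResidueField V))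

local notation "k" => IsLocalRing.ResidueField V
local notation "π" => IsLocalRing.residue V

/-- restriction of the residue map to the pullback -/
noncomputable def resMap : ↥(D.comap (IsLocalRing.residue V)) →+* ↥D :=
  RingHom.codRestrict ((IsLocalRing.residue V).comp (Subring.subtype _)) D (fun x => x.2)

lemma resMap_coe (r : ↥(D.comap (IsLocalRing.residue V))) :
    (resMap D r : IsLocalRing.ResidueField V) = IsLocalRing.residue V (r : V) := rfl

lemma resMap_surjective : Function.Surjective (resMap D) := by
  intro d
  obtain ⟨v, hv⟩ := IsLocalRing.residue_surjective (R := V) (d : k)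
  have hvmem : v ∈ D.comap (IsLocalRing.residue V) := by
    rw [Subring.mem_comap, hv]; exact d.2
  exact ⟨⟨v, hvmem⟩, Subtype.ext (by rw [resMap_coe]; exact hv)⟩

set_option maxHeartbeats 1000000 in
set_option synthInstance.maxHeartbeats 1000000 in
theorem isTIdeal_map_resMap
    (hqf : ∀ x : k, x ≠ 0 → ∃ a b : ↥D, (b : k) ≠ 0 ∧ x * (b : k) = (a : k))
    (M : Ideal ↥(D.comap (IsLocalRing.residue V)))
    (hMt : IsTIdeal _ M)
    (hker : ∀ r : ↥(D.comap (IsLocalRing.residue V)), IsLocalRing.residue V (r : V) = 0 → r ∈ M) :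
    IsTIdeal ↥D (M.map (resMap D)) := by
  classical
  set R' := ↥(D.comap (IsLocalRing.residue V))
  set ρ := resMap D
  have hsurj : Function.Surjective ρ := resMap_surjective D
  set φ' := algebraMap R' (FractionRing R') with hφ'
  set ψ := algebraMap ↥D (FractionRing ↥D) with hψ
  have hφinj : Function.Injective φ' := IsFractionRing.injective R' (FractionRing R')
  have hψinj : Function.Injective ψ := IsFractionRing.injective ↥D (FractionRing ↥D)
  have hMeq : ∀ r : R', r ∈ M ↔ ρ r ∈ M.map ρ := by
    intro r
    constructor
    · exact fun h => Ideal.mem_map_of_mem ρ h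
    · intro h
      have h2 : r ∈ Ideal.comap ρ (M.map ρ) := h
      rw [Ideal.comap_map_of_surjective ρ hsurj] at h2
      refine (sup_le le_rfl ?_ : M ⊔ Ideal.comap ρ ⊥ ≤ M) h2
      intro s hs
      apply hker s
      have : ρ s = 0 := hs
      rw [← resMap_coe D s, this, Subring.coe_zero]
  -- coercion-injectivity in D
  have hDinj : ∀ a b : ↥D, (a : k) = (b : k) → a = b := fun a b h => Subtype.ext h
  intro x ⟨J, hJfg, hJle, hmem⟩
  rcases eq_or_ne J ⊥ with rfl | hJne
  · have hx0 : ψ x = 0 := eq_zero_of_mem_vclosure_bot hmem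
    have : x = 0 := hψinj (by rw [hx0, map_zero])
    subst this
    exact Ideal.zero_mem _
  obtain ⟨T, hT⟩ := hJfg
  set T₀ : Finset ↥D := T.erase 0 with hT₀def
  have hT₀span : Ideal.span (↑T₀ : Set ↥D) = J := by
    rw [← hT]
    apply le_antisymm (Ideal.span_mono (by exact_mod_cast T.erase_subset 0))
    have h1 : (↑T : Set ↥D) ⊆ insert 0 (↑T₀ : Set ↥D) := by
      intro g hg
      rcases eq_or_ne g 0 with rfl | hg0
      · exact Set.mem_insert _ _
      · exact Set.mem_insert_of_mem _ (Finset.mem_coe.2 (Finset.mem_erase.2 ⟨hg0, hg⟩))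
    calc Ideal.span (↑T : Set ↥D) ≤ Ideal.span (insert 0 (↑T₀ : Set ↥D)) := Ideal.span_mono h1
    _ = Ideal.span (↑T₀ : Set ↥D) := Submodule.span_insert_zero
  have hT₀ne : ∃ g ∈ T₀, g ≠ (0 : ↥D) := by
    by_contra hc
    push_neg at hc
    apply hJne
    rw [← hT₀span, Ideal.span_eq_bot]
    intro g hg
    exact hc g (Finset.mem_coe.1 hg)
  choose lift hlift using hsurj
  set T' : Finset R' := T₀.image lift with hT'def
  set J' : Ideal R' := Ideal.span (↑T' : Set R') with hJ'def
  have hmemT' : ∀ g ∈ T₀, lift g ∈ J' := by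
    intro g hg
    exact Ideal.subset_span (Finset.mem_coe.2 (Finset.mem_image_of_mem lift hg))
  have hJ'le : J' ≤ M := by
    rw [hJ'def, Ideal.span_le]
    intro g' hg'
    obtain ⟨g, hg, rfl⟩ := Finset.mem_image.1 (Finset.mem_coe.1 hg')
    refine (hMeq _).2 ?_
    rw [hlift g]
    exact hJle (hT₀span ▸ Ideal.subset_span (Finset.mem_coe.2 hg))
  have hJ'ne : J' ≠ ⊥ := by
    obtain ⟨g, hg, hg0⟩ := hT₀ne
    intro h0
    have : lift g = 0 := by
      have := hmemT' g hg
      rwa [h0, Ideal.mem_bot] at this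
    apply hg0
    rw [← hlift g, this, map_zero]
  -- lemma relating z to generators, then main membership
  suffices hmain : φ' (lift x) ∈ (1 / (1 / (J' : FractionalIdeal R'⁰ (FractionRing R')))) by
    have hx' : lift x ∈ M := hMt (lift x) ⟨J', ⟨T', hJ'def.symm⟩, hJ'le, hmain⟩
    have := Ideal.mem_map_of_mem ρ hx'
    rwa [hlift x] at this
  rw [mem_vclosure_iff hJ'ne]
  intro z hz
  obtain ⟨aa, bb, hbbnzd, hzeq⟩ := IsFractionRing.div_surjective (A := R') z
  have hbb0 : bb ≠ (0 : R') := nonZeroDivisors.ne_zero hbbnzd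
  have hbbV : (bb : V) ≠ 0 := fun h => hbb0 (Subtype.ext h)
  have hφbb : φ' bb ≠ 0 := fun h => hbb0 (hφinj (by rw [h, map_zero]))
  -- from hz, for each generator g we get the division relation in R'
  have hrel : ∀ g ∈ T₀, ∃ r : R', (r : V) * (bb : V) = (aa : V) * ((lift g : R') : V) := by
    intro g hg
    obtain ⟨r, hr⟩ := hz (lift g) (hmemT' g hg)
    refine ⟨r, ?_⟩
    have : φ' r * φ' bb = φ' aa * φ' (lift g) := by
      rw [hr, ← hzeq]
      rw [div_mul_eq_mul_div, div_mul_cancel₀ _ hφbb]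
    have h2 : r * bb = aa * lift g := hφinj (by rw [map_mul, map_mul, this])
    exact_mod_cast congrArg (Subtype.val) h2
  -- case A as a reusable fact
  have caseA : ∀ w : V, (bb : V) * w = (aa : V) → ∃ r : R', φ' r = φ' (lift x) * z := by
    intro w hw
    -- each generator: π(r_g) = π w * g
    have hgen : ∀ g ∈ T₀, ∃ rg : ↥D, (rg : k) = π w * (g : k) := by
      intro g hg
      obtain ⟨r, hr⟩ := hrel g hg
      refine ⟨ρ r, ?_⟩
      have hrw : (r : V) = w * ((lift g : R') : V) := by
        apply mul_left_cancel₀ hbbV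
        calc (bb : V) * (r : V) = (r : V) * (bb : V) := by ring
        _ = (aa : V) * ((lift g : R') : V) := hr
        _ = ((bb : V) * w) * ((lift g : R') : V) := by rw [hw]
        _ = (bb : V) * (w * ((lift g : R') : V)) := by ring
      rw [resMap_coe, hrw, map_mul]
      congr 1
      rw [← resMap_coe, hlift g]
    -- express π w as a fraction over D
    obtain ⟨α, β, hβ, hαβ⟩ : ∃ α β : ↥D, (β : k) ≠ 0 ∧ π w * (β : k) = (α : k) := by
      by_cases hw0 : π w = 0
      · exact ⟨0, 1, by simp, by simp [hw0]⟩
      · exact hqf (π w) hw0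
    have hβ0 : β ≠ (0 : ↥D) := fun h => hβ (by rw [h, Subring.coe_zero])
    have hψβ : ψ β ≠ 0 := fun h => hβ0 (hψinj (by rw [h, map_zero]))
    set Z : FractionRing ↥D := ψ α / ψ β with hZdef
    -- Z ∈ 1/J, elementwise
    have hZmem : ∀ y ∈ J, ∃ r : ↥D, ψ r = Z * ψ y := by
      intro y hy
      rw [← hT₀span] at hy
      induction hy using Submodule.span_induction with
      | mem g hg =>
        obtain ⟨rg, hrg⟩ := hgen g (Finset.mem_coe.1 hg)
        refine ⟨rg, ?_⟩
        have hDrel : α * g = β * rg := by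
          apply hDinj
          push_cast
          rw [hrg, ← hαβ]
          ring
        rw [hZdef, div_mul_eq_mul_div, eq_div_iff hψβ, ← map_mul, ← map_mul, hDrel]
        ring_nf
      | zero => exact ⟨0, by simp⟩
      | add y₁ y₂ h₁ h₂ ih₁ ih₂ =>
        obtain ⟨r₁, hr₁⟩ := ih₁
        obtain ⟨r₂, hr₂⟩ := ih₂
        exact ⟨r₁ + r₂, by rw [map_add, map_add, hr₁, hr₂, mul_add]⟩
      | smul c y₁ h₁ ih =>
        obtain ⟨r, hr⟩ := ih
        refine ⟨c * r, ?_⟩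
        rw [smul_eq_mul, map_mul, map_mul, hr]
        ring
    rw [mem_vclosure_iff hJne] at hmem
    obtain ⟨e, he⟩ := hmem Z hZmem
    -- e * β = x * α in D
    have heD : e * β = x * α := by
      apply hψinj
      rw [map_mul, map_mul, he, hZdef]
      field_simp
      exact mul_comm _ _
    -- the candidate element: (lift x : V) * w, whose residue is ↑e ∈ D
    have hres : π ((lift x : R') : V) * π w = (e : k) := by
      have hx : ((ρ (lift x) : ↥D) : k) = (x : k) := by rw [hlift x]
      have h1 : (π ((lift x : R') : V)) = (x : k) := by rw [← resMap_coe, hlift x]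
      have h2 : ((x : k) * π w) * (β : k) = (e : k) * (β : k) := by
        calc ((x : k) * π w) * (β : k) = (x : k) * (π w * (β : k)) := by ring
        _ = (x : k) * (α : k) := by rw [hαβ]
        _ = (e : k) * (β : k) := by
            have := congrArg (Subtype.val (p := (· ∈ D))) heD
            push_cast at this
            rw [← this]
      rw [h1]
      exact mul_right_cancel₀ hβ h2
    have hmemD : π (((lift x : R') : V) * w) ∈ D := by
      rw [map_mul, hres]
      exact e.2
    set r : R' := ⟨((lift x : R') : V) * w, hmemD⟩ with hrdef
    have hreq : r * bb = lift x * aa := by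
      apply Subtype.ext
      push_cast
      calc ((lift x : R') : V) * w * (bb : V) = ((lift x : R') : V) * ((bb : V) * w) := by ring
      _ = ((lift x : R') : V) * (aa : V) := by rw [hw]
    refine ⟨r, ?_⟩
    have : φ' r * φ' bb = φ' (lift x) * φ' aa := by
      rw [← map_mul, ← map_mul, hreq]
    rw [← hzeq, ← mul_div_assoc, eq_div_iff hφbb]
    exact this
  obtain ⟨w, hw | hw⟩ := ValuationRing.cond (aa : V) (bb : V)
  · -- aa * w = bb
    by_cases hu : IsUnit w
    · obtain ⟨u, rfl⟩ := hu
      refine caseA ((u⁻¹ : Vˣ) : V) ?_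
      rw [← hw, mul_assoc, Units.mul_inv, mul_one]
    · -- w nonunit : contradiction with nonzero generator
      exfalso
      have hw0 : π w = 0 :=
        Ideal.Quotient.eq_zero_iff_mem.2 ((IsLocalRing.mem_maximalIdeal w).2 hu)
      have haa0 : (aa : V) ≠ 0 := by
        intro h
        rw [h, zero_mul] at hw
        exact hbbV hw.symm
      obtain ⟨g, hg, hg0⟩ := hT₀ne
      obtain ⟨r, hr⟩ := hrel g hg
      have : (r : V) * w = ((lift g : R') : V) := by
        apply mul_left_cancel₀ haa0
        calc (aa : V) * ((r : V) * w) = (r : V) * ((aa : V) * w) := by ring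
        _ = (r : V) * (bb : V) := by rw [hw]
        _ = (aa : V) * ((lift g : R') : V) := hr
      apply hg0
      have hgk : (g : k) = 0 := by
        rw [← hlift g, resMap_coe, ← this, map_mul, hw0, mul_zero]
      exact hDinj g 0 (by rw [hgk, Subring.coe_zero])
  · exact caseA w hw

end Pullback

set_option maxHeartbeats 1000000 in
set_option synthInstance.maxHeartbeats 1000000 in
theorem isPvMD_pullback_of_valuation {V : Type*} [CommRing V] [IsDomain V] [ValuationRing V]
    (D : Subring (IsLocalRing.ResidueField V)) (hD : IsPvMD ↥D)
    (hqf : ∀ x : IsLocalRing.ResidueField V, x ≠ 0 → ∃ a b : ↥D, (b : IsLocalRing.ResidueField V) ≠ 0 ∧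
      x * (b : IsLocalRing.ResidueField V) = (a : IsLocalRing.ResidueField V)) :
    IsPvMD ↥(D.comap (IsLocalRing.residue V)) := by
  classical
  intro M hMt hMprime
  apply valuationRing_locg_of
  have h1M : (1 : ↥(D.comap (IsLocalRing.residue V))) ∉ M := fun h =>
    hMprime.ne_top ((Ideal.eq_top_iff_one M).2 h)
  by_cases hker : ∀ r : ↥(D.comap (IsLocalRing.residue V)),
      IsLocalRing.residue V (r : V) = 0 → r ∈ M
  · -- the prime contains the maximal ideal of V
    set ρ := resMap D with hρdef
    have hsurj : Function.Surjective ρ := resMap_surjective D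
    have hMeq : ∀ r, r ∈ M ↔ ρ r ∈ M.map ρ := by
      intro r
      constructor
      · exact fun h => Ideal.mem_map_of_mem ρ h
      · intro h
        have h2 : r ∈ Ideal.comap ρ (M.map ρ) := h
        rw [Ideal.comap_map_of_surjective ρ hsurj] at h2
        refine (sup_le le_rfl ?_ : M ⊔ Ideal.comap ρ ⊥ ≤ M) h2
        intro s hs
        apply hker s
        have hs0 : ρ s = 0 := hs
        rw [← resMap_coe D s, hs0, Subring.coe_zero]
    have h𝔭t : IsTIdeal ↥D (M.map ρ) := isTIdeal_map_resMap D hqf M hMt.1 hker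
    have h𝔭ne : M.map ρ ≠ ⊤ := by
      intro htop
      have h1 : (1 : ↥D) ∈ M.map ρ := htop ▸ Submodule.mem_top
      exact h1M ((hMeq 1).2 (by rwa [map_one]))
    obtain ⟨𝔪, h𝔭𝔪, h𝔪max⟩ := exists_isTMax h𝔭t h𝔭ne
    have h𝔪prime : 𝔪.IsPrime := h𝔪max.isPrime_s18
    have hval := hD 𝔪 h𝔪max h𝔪prime
    have h1𝔪 : (1 : ↥D) ∉ 𝔪 := fun h => h𝔪prime.ne_top ((Ideal.eq_top_iff_one 𝔪).2 h)
    have hψinj : Function.Injective (algebraMap ↥D (FractionRing ↥D)) :=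
      IsFractionRing.injective ↥D (FractionRing ↥D)
    -- the localization of D at 𝔪, inside k, is a valuation ring : dichotomy
    have hdia : ∀ x : IsLocalRing.ResidueField V, x ≠ 0 →
        (∃ c d : ↥D, d ∉ 𝔪 ∧ x * (d : IsLocalRing.ResidueField V) = (c : IsLocalRing.ResidueField V)) ∨
        (∃ c d : ↥D, d ∉ 𝔪 ∧ (d : IsLocalRing.ResidueField V) = x * (c : IsLocalRing.ResidueField V)) := by
      intro x hx
      obtain ⟨α, β, hβ, hαβ⟩ := hqf x hx
      have hβ0 : (β : ↥D) ≠ 0 := fun h => hβ (by rw [h, Subring.coe_zero])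
      set ψ := algebraMap ↥D (FractionRing ↥D) with hψdef
      have hψβ : ψ β ≠ 0 := fun h => hβ0 (hψinj (by rw [h, map_zero]))
      set p : PrimeSpectrum ↥D := ⟨𝔪, h𝔪prime⟩ with hpdef
      set X : ↥(locg (K := FractionRing ↥D) p) := ⟨ψ α, α, 1, h1𝔪, by rw [map_one, mul_one]⟩ with hX
      set Y : ↥(locg (K := FractionRing ↥D) p) := ⟨ψ β, β, 1, h1𝔪, by rw [map_one, mul_one]⟩ with hY
      haveI := hval
      obtain ⟨C, hC⟩ := ValuationRing.cond X Y
      obtain ⟨c₀, d₀, hd₀, hCe⟩ := C.2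
      rcases hC with hC | hC
      · -- ψ α * C = ψ β  :  x⁻¹ ∈ D_𝔪
        right
        refine ⟨c₀, d₀, hd₀, ?_⟩
        have h1 : ψ α * (C : FractionRing ↥D) = ψ β := by
          have := congrArg (Subtype.val) hC
          push_cast at this
          exact this
        have h2 : α * c₀ = β * d₀ := by
          apply hψinj
          rw [map_mul, map_mul]
          calc ψ α * ψ c₀ = ψ α * ((C : FractionRing ↥D) * ψ d₀) := by rw [hCe]
          _ = (ψ α * (C : FractionRing ↥D)) * ψ d₀ := by ring
          _ = ψ β * ψ d₀ := by rw [h1]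
        have h3 := congrArg (Subtype.val (p := (· ∈ D))) h2
        push_cast at h3
        apply mul_left_cancel₀ hβ
        calc (β : IsLocalRing.ResidueField V) * (d₀ : IsLocalRing.ResidueField V)
            = (α : IsLocalRing.ResidueField V) * (c₀ : IsLocalRing.ResidueField V) := h3.symm
        _ = (x * (β : IsLocalRing.ResidueField V)) * (c₀ : IsLocalRing.ResidueField V) := by
            rw [hαβ]
        _ = (β : IsLocalRing.ResidueField V) * (x * (c₀ : IsLocalRing.ResidueField V)) := by ring
      · -- ψ β * C = ψ α  :  x ∈ D_𝔪
        left
        refine ⟨c₀, d₀, hd₀, ?_⟩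
        have h1 : ψ β * (C : FractionRing ↥D) = ψ α := by
          have := congrArg (Subtype.val) hC
          push_cast at this
          exact this
        have h2 : β * c₀ = α * d₀ := by
          apply hψinj
          rw [map_mul, map_mul]
          calc ψ β * ψ c₀ = ψ β * ((C : FractionRing ↥D) * ψ d₀) := by rw [hCe]
          _ = (ψ β * (C : FractionRing ↥D)) * ψ d₀ := by ring
          _ = ψ α * ψ d₀ := by rw [h1]
        have h3 := congrArg (Subtype.val (p := (· ∈ D))) h2
        push_cast at h3
        apply mul_left_cancel₀ hβ
        calc (β : IsLocalRing.ResidueField V) * (x * (d₀ : IsLocalRing.ResidueField V))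
            = (x * (β : IsLocalRing.ResidueField V)) * (d₀ : IsLocalRing.ResidueField V) := by ring
        _ = (α : IsLocalRing.ResidueField V) * (d₀ : IsLocalRing.ResidueField V) := by rw [hαβ]
        _ = (β : IsLocalRing.ResidueField V) * (c₀ : IsLocalRing.ResidueField V) := h3.symm
    choose liftD hliftD using hsurj
    have hnotM : ∀ d₀ : ↥D, d₀ ∉ 𝔪 → liftD d₀ ∉ M := by
      intro d₀ hd₀ hmem
      exact hd₀ (hliftD d₀ ▸ h𝔭𝔪 ((hMeq (liftD d₀)).1 hmem))
    -- the symmetric divisibility step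
    have solve : ∀ a b : ↥(D.comap (IsLocalRing.residue V)), ∀ w : V,
        (a : V) * w = (b : V) →
        ((∃ c d : ↥(D.comap (IsLocalRing.residue V)), d ∉ M ∧ a * d = b * c) ∨
         (∃ c d : ↥(D.comap (IsLocalRing.residue V)), d ∉ M ∧ b * d = a * c)) := by
      intro a b w hw
      by_cases hw0 : IsLocalRing.residue V w = 0
      · right
        have hmem : w ∈ D.comap (IsLocalRing.residue V) := by
          rw [Subring.mem_comap, hw0]; exact D.zero_mem
        refine ⟨⟨w, hmem⟩, 1, h1M, ?_⟩
        apply Subtype.ext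
        push_cast
        rw [← hw]; ring
      rcases hdia (IsLocalRing.residue V w) hw0 with ⟨c₀, d₀, hd₀, heq⟩ | ⟨c₀, d₀, hd₀, heq⟩
      · -- residue w ∈ D_𝔪 : b * d = a * (w d)
        right
        set d := liftD d₀ with hd
        have hdres : IsLocalRing.residue V (d : V) = (d₀ : IsLocalRing.ResidueField V) := by
          rw [← resMap_coe D d, hliftD d₀]
        have hmem : w * (d : V) ∈ D.comap (IsLocalRing.residue V) := by
          rw [Subring.mem_comap, map_mul, hdres, heq]
          exact c₀.2
        refine ⟨⟨w * (d : V), hmem⟩, d, hnotM d₀ hd₀, ?_⟩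
        apply Subtype.ext
        push_cast
        rw [← hw]; ring
      · -- residue w is a unit with inverse in D_𝔪 : a * d = b * (w⁻¹ d)
        left
        have hu : IsUnit w := by
          by_contra hu
          exact hw0 (Ideal.Quotient.eq_zero_iff_mem.2 ((IsLocalRing.mem_maximalIdeal w).2 hu))
        obtain ⟨u, rfl⟩ := hu
        set d := liftD d₀ with hd
        have hdres : IsLocalRing.residue V (d : V) = (d₀ : IsLocalRing.ResidueField V) := by
          rw [← resMap_coe D d, hliftD d₀]
        have hmem : ((u⁻¹ : Vˣ) : V) * (d : V) ∈ D.comap (IsLocalRing.residue V) := by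
          have hres : IsLocalRing.residue V (((u⁻¹ : Vˣ) : V) * (d : V))
              = (c₀ : IsLocalRing.ResidueField V) := by
            rw [map_mul, hdres, heq, ← mul_assoc, ← map_mul, Units.inv_mul, map_one, one_mul]
          rw [Subring.mem_comap, hres]
          exact c₀.2
        refine ⟨⟨((u⁻¹ : Vˣ) : V) * (d : V), hmem⟩, d, hnotM d₀ hd₀, ?_⟩
        apply Subtype.ext
        push_cast
        rw [← hw]
        have huu : ((u : Vˣ) : V) * ((u⁻¹ : Vˣ) : V) = 1 := Units.mul_inv u
        linear_combination (-((a : V) * ((d : V)))) * huu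
    intro a b _ _
    obtain ⟨w, hw | hw⟩ := ValuationRing.cond (a : V) (b : V)
    · exact solve a b w hw
    · exact (solve b a w hw).symm
  · -- there is an element of the maximal ideal of V outside M
    push_neg at hker
    obtain ⟨t, ht0, htM⟩ := hker
    intro a b _ _
    have hwt : ∀ w : V, w * (t : V) ∈ D.comap (IsLocalRing.residue V) := by
      intro w
      rw [Subring.mem_comap, map_mul, ht0, mul_zero]
      exact D.zero_mem
    obtain ⟨w, hw | hw⟩ := ValuationRing.cond (a : V) (b : V)
    · right
      refine ⟨⟨w * (t : V), hwt w⟩, t, htM, ?_⟩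
      apply Subtype.ext
      push_cast
      rw [← hw]; ring
    · left
      refine ⟨⟨w * (t : V), hwt w⟩, t, htM, ?_⟩
      apply Subtype.ext
      push_cast
      rw [← hw]; ring
end
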